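/- arXiv:2009.03218 — 4 statements merged into one kernel-verified Lean document; each statement's English description precedes it below -/
import Mathlib

section
/- Suppose ψ is an n-qubit stabilizer state and y ∈ {0,1}^n satisfies ⟨y|ψ⟩ ≠ 0. If R is a uniformly random element of the stabilizer group Stab(ψ), and z ∈ {0,1}^n is the string such that |z⟩ is proportional to R|y⟩, then z is distributed according to p(z) = |⟨z|ψ⟩|^2. -/
open Matrix

/-- The `n`-qubit operator `X^a Z^b`, acting on computational basis states by
`X^a Z^b |y⟩ = (-1)^{b·y} |y + a⟩`. -/
def XZ {n : ℕ} (a b : Fin n → ZMod 2) :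
    Matrix (Fin n → ZMod 2) (Fin n → ZMod 2) ℂ :=
  Matrix.of fun x y => if x = y + a then (-1 : ℂ) ^ (b ⬝ᵥ y).val else 0

/-- A general `n`-qubit Pauli operator `i^α (-1)^β X^a Z^b`. -/
noncomputable def PauliOp {n : ℕ} (α β : ZMod 2) (a b : Fin n → ZMod 2) :
    Matrix (Fin n → ZMod 2) (Fin n → ZMod 2) ℂ :=
  (Complex.I ^ α.val * (-1 : ℂ) ^ β.val) • XZ a b

/-- Parameters `(α, β, a, b)` of a Pauli operator `i^α (-1)^β X^a Z^b`. -/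
abbrev PauliParam (n : ℕ) :=
  ZMod 2 × ZMod 2 × (Fin n → ZMod 2) × (Fin n → ZMod 2)

noncomputable def PauliOp' {n : ℕ} (q : PauliParam n) :
    Matrix (Fin n → ZMod 2) (Fin n → ZMod 2) ℂ :=
  PauliOp q.1 q.2.1 q.2.2.1 q.2.2.2

namespace RSS

noncomputable def ph (α β : ZMod 2) : ℂ := Complex.I ^ α.val * (-1 : ℂ) ^ β.val

lemma val2 : ((2:ZMod 2)).val = 0 := rfl
lemma val3 : ((3:ZMod 2)).val = 1 := rfl

lemma zmod2_cases (x : ZMod 2) : x = 0 ∨ x = 1 := by revert x; decide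

lemma ph_mul (α β α' β' : ZMod 2) :
    ph α β * ph α' β' = ph (α + α') (β + β' + α * α') := by
  rcases zmod2_cases α with rfl|rfl <;> rcases zmod2_cases β with rfl|rfl <;>
    rcases zmod2_cases α' with rfl|rfl <;> rcases zmod2_cases β' with rfl|rfl <;>
    simp [ph, show ((0:ZMod 2)).val = 0 from rfl, show ((1:ZMod 2)).val = 1 from rfl, val2, val3] <;> norm_num [Complex.I_sq, val2, val3]

lemma ph_add_snd (α β γ : ZMod 2) : ph α (β + γ) = ph α β * (-1 : ℂ) ^ γ.val := by
  rcases zmod2_cases α with rfl|rfl <;> rcases zmod2_cases β with rfl|rfl <;>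
    rcases zmod2_cases γ with rfl|rfl <;>
    simp [ph, show ((0:ZMod 2)).val = 0 from rfl, show ((1:ZMod 2)).val = 1 from rfl, val2, val3] <;> norm_num [val2, val3]

lemma neg_one_pow_add (u v : ZMod 2) :
    ((-1 : ℂ)) ^ (u + v).val = (-1 : ℂ) ^ u.val * (-1 : ℂ) ^ v.val := by
  rcases zmod2_cases u with rfl|rfl <;> rcases zmod2_cases v with rfl|rfl <;>
    norm_num [show ((0:ZMod 2)).val = 0 from rfl, show ((1:ZMod 2)).val = 1 from rfl, val2, val3]

lemma ph_ne_zero (α β : ZMod 2) : ph α β ≠ 0 := by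
  rcases zmod2_cases α with rfl|rfl <;> rcases zmod2_cases β with rfl|rfl <;>
    simp [ph, Complex.I_ne_zero]

lemma abs_ph (α β : ZMod 2) : ‖ph α β‖ = 1 := by
  rcases zmod2_cases α with rfl|rfl <;> rcases zmod2_cases β with rfl|rfl <;>
    simp [ph]

lemma ph_eq_one_iff (α β : ZMod 2) : ph α β = 1 ↔ α = 0 ∧ β = 0 := by
  rcases zmod2_cases α with rfl|rfl <;> rcases zmod2_cases β with rfl|rfl <;>
    simp [ph, show ((0:ZMod 2)).val = 0 from rfl, show ((1:ZMod 2)).val = 1 from rfl] <;>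
    norm_num [Complex.ext_iff]

variable {n : ℕ}

/-- composition of Pauli parameters: `PauliOp' (pmul q r) = PauliOp' q * PauliOp' r`. -/
def pmul (q r : PauliParam n) : PauliParam n :=
  (q.1 + r.1, q.2.1 + r.2.1 + q.1 * r.1 + q.2.2.2 ⬝ᵥ r.2.2.1,
   q.2.2.1 + r.2.2.1, q.2.2.2 + r.2.2.2)

/-- inverse (= adjoint) parameter. -/
def pinv (q : PauliParam n) : PauliParam n :=
  (q.1, q.2.1 + q.1 + q.2.2.2 ⬝ᵥ q.2.2.1, q.2.2.1, q.2.2.2)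

lemma addv_self (a : Fin n → ZMod 2) : a + a = 0 := by
  funext i; exact CharTwo.add_self_eq_zero (a i)

lemma addv_add_cancel (x a : Fin n → ZMod 2) : x + a + a = x := by
  rw [add_assoc, addv_self, add_zero]

lemma PauliOp'_apply (q : PauliParam n) (x w : Fin n → ZMod 2) :
    PauliOp' q x w
      = ph q.1 q.2.1 * (if x = w + q.2.2.1 then (-1 : ℂ) ^ (q.2.2.2 ⬝ᵥ w).val else 0) := by
  rfl

lemma pmul_spec (q r : PauliParam n) :
    PauliOp' (pmul q r) = PauliOp' q * PauliOp' r := by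
  ext x w
  rw [Matrix.mul_apply]
  simp only [PauliOp'_apply]
  rw [Finset.sum_eq_single (w + r.2.2.1)]
  · simp only [pmul]
    rcases eq_or_ne x (w + (q.2.2.1 + r.2.2.1)) with h | h
    · have hx : x = w + r.2.2.1 + q.2.2.1 := by rw [h]; ring
      rw [if_pos hx]
      simp only [h, eq_self_iff_true, if_true]
      rw [ph_add_snd, dotProduct_add, add_dotProduct, neg_one_pow_add, neg_one_pow_add, ← ph_mul]
      ring
    · have hx : x ≠ w + r.2.2.1 + q.2.2.1 := fun hc => h (by rw [hc]; ring)
      rw [if_neg hx]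
      simp only [h, if_false]
      ring
  · intro u _ hu
    rw [if_neg hu]
    ring
  · simp

lemma pinv_spec (q : PauliParam n) :
    (PauliOp' q)ᴴ = PauliOp' (pinv q) := by
  ext x w
  rw [Matrix.conjTranspose_apply]
  simp only [PauliOp'_apply, pinv]
  rcases eq_or_ne x (w + q.2.2.1) with h | h
  · have hw : w = x + q.2.2.1 := by rw [h, addv_add_cancel]
    rw [if_pos h, if_pos hw]
    have hdot : q.2.2.2 ⬝ᵥ x = q.2.2.2 ⬝ᵥ w + q.2.2.2 ⬝ᵥ q.2.2.1 := by
      rw [h, dotProduct_add]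
    rw [hdot]
    rw [ph_add_snd, ph_add_snd, neg_one_pow_add]
    rcases zmod2_cases q.1 with h1|h1 <;> rcases zmod2_cases q.2.1 with h2|h2 <;>
      rw [h1, h2] <;>
      simp [ph, show ((0:ZMod 2)).val = 0 from rfl, show ((1:ZMod 2)).val = 1 from rfl,
        _root_.map_mul, map_pow, Complex.conj_I] <;> ring
  · have hw : w ≠ x + q.2.2.1 := by
      intro hc; exact h (by rw [hc, addv_add_cancel])
    rw [if_neg h, if_neg hw]
    simp

lemma z2_cancel (x y : ZMod 2) : x + (x + y) = y := by revert x y; decide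

lemma betakey (q1 q2 r1 r2 u v : ZMod 2) :
    (q2 + q1 + u) + (q2 + r2 + q1 * r1 + v) + q1 * (q1 + r1) + (u + v) = r2 := by
  revert q1 q2 r1 r2 u v; decide

lemma vec_cancel (a c : Fin n → ZMod 2) : a + (a + c) = c := by
  funext i; exact z2_cancel _ _

lemma pmul_pinv_cancel_left (q r : PauliParam n) : pmul (pinv q) (pmul q r) = r := by
  refine Prod.ext (z2_cancel _ _) (Prod.ext ?_ (Prod.ext (vec_cancel _ _) (vec_cancel _ _)))
  show (q.2.1 + q.1 + q.2.2.2 ⬝ᵥ q.2.2.1)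
      + (q.2.1 + r.2.1 + q.1 * r.1 + q.2.2.2 ⬝ᵥ r.2.2.1)
      + q.1 * (q.1 + r.1) + q.2.2.2 ⬝ᵥ (q.2.2.1 + r.2.2.1) = r.2.1
  rw [dotProduct_add]
  exact betakey _ _ _ _ _ _

lemma pmul_pinv_cancel_left' (q r : PauliParam n) : pmul q (pmul (pinv q) r) = r := by
  refine Prod.ext (z2_cancel _ _) (Prod.ext ?_ (Prod.ext (vec_cancel _ _) (vec_cancel _ _)))
  show q.2.1 + ((q.2.1 + q.1 + q.2.2.2 ⬝ᵥ q.2.2.1) + r.2.1 + q.1 * r.1 + q.2.2.2 ⬝ᵥ r.2.2.1)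
      + q.1 * (q.1 + r.1) + q.2.2.2 ⬝ᵥ (q.2.2.1 + r.2.2.1) = r.2.1
  rw [dotProduct_add]
  revert q r
  intro q r
  generalize q.2.2.2 ⬝ᵥ q.2.2.1 = u
  generalize q.2.2.2 ⬝ᵥ r.2.2.1 = v
  generalize q.1 = q1 at *
  generalize q.2.1 = q2
  generalize r.1 = r1
  generalize r.2.1 = r2
  revert q1 q2 r1 r2 u v; decide

lemma pinv_pinv (q : PauliParam n) : pinv (pinv q) = q := by
  refine Prod.ext rfl (Prod.ext ?_ rfl)
  show (q.2.1 + q.1 + q.2.2.2 ⬝ᵥ q.2.2.1) + q.1 + q.2.2.2 ⬝ᵥ q.2.2.1 = q.2.1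
  generalize q.2.2.2 ⬝ᵥ q.2.2.1 = u
  generalize q.1 = q1
  generalize q.2.1 = q2
  revert q1 q2 u; decide

lemma pmul_pinv_self (q : PauliParam n) : pmul (pinv q) q = (0, 0, 0, 0) := by
  refine Prod.ext (by exact CharTwo.add_self_eq_zero q.1)
    (Prod.ext ?_ (Prod.ext (addv_self _) (addv_self _)))
  show (q.2.1 + q.1 + q.2.2.2 ⬝ᵥ q.2.2.1) + q.2.1 + q.1 * q.1 + q.2.2.2 ⬝ᵥ q.2.2.1 = 0
  generalize q.2.2.2 ⬝ᵥ q.2.2.1 = u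
  generalize q.1 = q1
  generalize q.2.1 = q2
  revert q1 q2 u; decide

lemma PauliOp'_one : PauliOp' ((0, 0, 0, 0) : PauliParam n) = 1 := by
  ext x w
  simp only [PauliOp'_apply, ph, Matrix.one_apply,
    show ((0:ZMod 2)).val = 0 from rfl, zero_dotProduct, add_zero]
  simp [eq_comm]

lemma sum_neg_one_pow {b : Fin n → ZMod 2} (hb : b ≠ 0) :
    ∑ x : Fin n → ZMod 2, ((-1 : ℂ) ^ ((b ⬝ᵥ x).val)) = 0 := by
  obtain ⟨i, hi⟩ : ∃ i, b i ≠ 0 := by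
    by_contra h; push_neg at h; exact hb (funext h)
  have hbi : b i = 1 := (zmod2_cases (b i)).resolve_left hi
  set v : Fin n → ZMod 2 := Pi.single i 1 with hv
  have key : ∀ x, b ⬝ᵥ (x + v) = b ⬝ᵥ x + 1 := by
    intro x
    rw [dotProduct_add, hv]
    congr 1
    rw [dotProduct_single, hbi, mul_one]
  have h1 : ∑ x : Fin n → ZMod 2, ((-1 : ℂ) ^ ((b ⬝ᵥ x).val))
      = ∑ x : Fin n → ZMod 2, ((-1 : ℂ) ^ ((b ⬝ᵥ (x + v)).val)) := by
    exact Fintype.sum_equiv (Equiv.addRight v) _ _ (fun x => by rw [show (Equiv.addRight v) x + v = x from addv_add_cancel x v])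
  have h2 : ∀ x : Fin n → ZMod 2, ((-1 : ℂ) ^ ((b ⬝ᵥ (x + v)).val))
      = -((-1 : ℂ) ^ ((b ⬝ᵥ x).val)) := by
    intro x
    rw [key, neg_one_pow_add]
    norm_num [show ((1:ZMod 2)).val = 1 from rfl]
  rw [funext h2] at h1
  rw [Finset.sum_neg_distrib] at h1
  have h3 : (∑ x : Fin n → ZMod 2, ((-1 : ℂ) ^ ((b ⬝ᵥ x).val)))
      + (∑ x : Fin n → ZMod 2, ((-1 : ℂ) ^ ((b ⬝ᵥ x).val))) = 0 := by
    linear_combination h1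
  exact add_self_eq_zero.mp h3

-- appended lemmas (namespace RSS still open context assumed)
lemma PauliOp'_scalar (α β : ZMod 2) :
    PauliOp' ((α, β, 0, 0) : PauliParam n) = ph α β • 1 := by
  ext x w
  simp only [PauliOp'_apply, Matrix.smul_apply, Matrix.one_apply, zero_dotProduct,
    add_zero, pow_zero]
  by_cases h : x = w <;> simp [h]

lemma trace_PauliOp_a0 (α β : ZMod 2) (b : Fin n → ZMod 2) :
    Matrix.trace (PauliOp' ((α, β, 0, b) : PauliParam n))
      = ph α β * ∑ x : Fin n → ZMod 2, ((-1 : ℂ) ^ ((b ⬝ᵥ x).val)) := by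
  rw [Matrix.trace, Finset.mul_sum]
  refine Finset.sum_congr rfl fun x _ => ?_
  simp [Matrix.diag, PauliOp'_apply]

lemma trace_PauliOp_ne {a : Fin n → ZMod 2} (ha : a ≠ 0) (α β : ZMod 2)
    (b : Fin n → ZMod 2) :
    Matrix.trace (PauliOp' ((α, β, a, b) : PauliParam n)) = 0 := by
  rw [Matrix.trace]
  refine Finset.sum_eq_zero fun x _ => ?_
  have hx : x ≠ x + a := by
    intro hc
    exact ha (by simpa using (left_eq_add.mp hc))
  rw [Matrix.diag]
  rw [PauliOp'_apply, if_neg hx, mul_zero]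

lemma stab_entry {ψ : (Fin n → ZMod 2) → ℂ} {q : PauliParam n}
    (hq : PauliOp' q *ᵥ ψ = ψ) {y z : Fin n → ZMod 2} (hz : y + q.2.2.1 = z) :
    PauliOp' q z y * ψ y = ψ z := by
  have hzy : z = y + q.2.2.1 := hz.symm
  have hmv := congrFun hq z
  simp only [Matrix.mulVec, dotProduct] at hmv
  rw [← hmv]
  refine Finset.sum_eq_single (f := fun w => PauliOp' q z w * ψ w) y (fun w _ hw => ?_) (fun hy => absurd (Finset.mem_univ y) hy) |>.symm
  have : z ≠ w + q.2.2.1 := by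
    intro hc
    exact hw (by rw [← addv_add_cancel w q.2.2.1, ← hc, hzy, addv_add_cancel])
  rw [PauliOp'_apply, if_neg this]
  ring

lemma entry_zero {q : PauliParam n} {y z : Fin n → ZMod 2} (hz : y + q.2.2.1 ≠ z) :
    PauliOp' q z y = 0 := by
  rw [PauliOp'_apply, if_neg (fun hc : z = y + q.2.2.1 => hz hc.symm), mul_zero]

lemma abs_entry {q : PauliParam n} {y z : Fin n → ZMod 2} (hz : y + q.2.2.1 = z) :
    ‖PauliOp' q z y‖ = 1 := by
  rw [PauliOp'_apply, if_pos hz.symm, norm_mul, abs_ph]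
  rcases zmod2_cases (q.2.2.2 ⬝ᵥ y) with h|h <;> rw [h] <;>
    norm_num [show ((0:ZMod 2)).val = 0 from rfl, show ((1:ZMod 2)).val = 1 from rfl]

end RSS

open Classical in
/-- Sampling with a random stabilizer: let `ψ` be a normalized `n`-qubit state whose
stabilizer group (parametrized by `(α,β,a,b)`) has exactly `2^n` elements, i.e. a
stabilizer state, and let `y` satisfy `⟨y|ψ⟩ ≠ 0`. A stabilizer `P = i^α(-1)^β X^a Z^b`
maps `|y⟩` to a multiple of `|z⟩` exactly when `z = y + a`; the number of stabilizers
leading to a given outcome `z`, divided by `2^n`, equals `p(z) = |⟨z|ψ⟩|²`. -/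
theorem random_stabilizer_sampling {n : ℕ} (ψ : (Fin n → ZMod 2) → ℂ)
    (hnorm : ∑ z, ‖ψ z‖ ^ 2 = 1)
    (hcard : (Finset.univ.filter fun q : PauliParam n => PauliOp' q *ᵥ ψ = ψ).card = 2 ^ n)
    (y : Fin n → ZMod 2) (hy : ψ y ≠ 0) (z : Fin n → ZMod 2) :
    (((Finset.univ.filter fun q : PauliParam n =>
        PauliOp' q *ᵥ ψ = ψ ∧ y + q.2.2.1 = z).card : ℝ) : ℝ)
      = 2 ^ n * ‖ψ z‖ ^ 2 := by
  set S : Finset (PauliParam n) :=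
    Finset.univ.filter fun q : PauliParam n => PauliOp' q *ᵥ ψ = ψ with hSdef
  have hSmem : ∀ q : PauliParam n, q ∈ S ↔ PauliOp' q *ᵥ ψ = ψ := by
    intro q; simp [hSdef]
  set A : Matrix (Fin n → ZMod 2) (Fin n → ZMod 2) ℂ := ∑ q ∈ S, PauliOp' q with hAdef
  have hone : ((0, 0, 0, 0) : PauliParam n) ∈ S := by
    rw [hSmem, RSS.PauliOp'_one, Matrix.one_mulVec]
  have hmul : ∀ q ∈ S, ∀ r ∈ S, RSS.pmul q r ∈ S := by
    intro q hq r hr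
    rw [hSmem] at hq hr ⊢
    rw [RSS.pmul_spec, ← Matrix.mulVec_mulVec, hr, hq]
  have hinv : ∀ q ∈ S, RSS.pinv q ∈ S := by
    intro q hq
    rw [hSmem] at hq ⊢
    conv_lhs => rw [← hq]
    rw [Matrix.mulVec_mulVec, ← RSS.pmul_spec, RSS.pmul_pinv_self, RSS.PauliOp'_one,
      Matrix.one_mulVec]
  have hAvec : A *ᵥ ψ = (2 ^ n : ℂ) • ψ := by
    have hsplit : A *ᵥ ψ = ∑ q ∈ S, PauliOp' q *ᵥ ψ := by
      ext x
      simp only [hAdef, Matrix.mulVec, dotProduct, Matrix.sum_apply, Finset.sum_apply,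
        Finset.sum_mul]
      rw [Finset.sum_comm]
    rw [hsplit, Finset.sum_congr rfl (fun q hq => (hSmem q).mp hq), Finset.sum_const, hcard,
      ← Nat.cast_smul_eq_nsmul ℂ]
    norm_num
  have hAH : Aᴴ = A := by
    rw [hAdef, Matrix.conjTranspose_sum]
    refine Finset.sum_bij' (fun q _ => RSS.pinv q) (fun q _ => RSS.pinv q)
      (fun q hq => hinv q hq) (fun q hq => hinv q hq)
      (fun q _ => RSS.pinv_pinv q) (fun q _ => RSS.pinv_pinv q)
      (fun q _ => RSS.pinv_spec q)
  have hAA : A * A = (2 ^ n : ℂ) • A := by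
    rw [hAdef, Finset.sum_mul_sum]
    have hrow : ∀ q ∈ S, (∑ r ∈ S, PauliOp' q * PauliOp' r) = ∑ r ∈ S, PauliOp' r := by
      intro q hq
      refine Finset.sum_bij' (fun r _ => RSS.pmul q r) (fun r _ => RSS.pmul (RSS.pinv q) r)
        (fun r hr => hmul q hq r hr) (fun r hr => hmul _ (hinv q hq) r hr)
        (fun r _ => RSS.pmul_pinv_cancel_left q r)
        (fun r _ => RSS.pmul_pinv_cancel_left' q r)
        (fun r _ => (RSS.pmul_spec q r).symm)
    rw [Finset.sum_congr rfl hrow, Finset.sum_const, hcard, ← Nat.cast_smul_eq_nsmul ℂ]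
    norm_num
  have htrA : Matrix.trace A = (2 ^ n : ℂ) := by
    rw [hAdef, Matrix.trace_sum]
    rw [Finset.sum_eq_single_of_mem ((0, 0, 0, 0) : PauliParam n) hone ?_]
    · rw [RSS.PauliOp'_one, Matrix.trace_one]
      simp [Fintype.card_fun]
    · intro q hq hne
      obtain ⟨α, β, a, b⟩ := q
      by_cases ha : a = 0
      · subst ha
        by_cases hb : b = 0
        · exfalso
          subst hb
          rw [hSmem, RSS.PauliOp'_scalar, Matrix.smul_mulVec, Matrix.one_mulVec] at hq
          have hphi : RSS.ph α β * ψ y = ψ y := congrFun hq y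
          have hsub : (RSS.ph α β - 1) * ψ y = 0 := by linear_combination hphi
          have : RSS.ph α β = 1 := by
            rcases mul_eq_zero.mp hsub with h | h
            · linear_combination h
            · exact absurd h hy
          obtain ⟨h1, h2⟩ := (RSS.ph_eq_one_iff α β).mp this
          exact hne (by rw [h1, h2])
        · rw [RSS.trace_PauliOp_a0, RSS.sum_neg_one_pow hb, mul_zero]
      · exact RSS.trace_PauliOp_ne ha α β b
  -- the projector onto ψ
  set Pm : Matrix (Fin n → ZMod 2) (Fin n → ZMod 2) ℂ :=
    Matrix.of fun x w => ψ x * (starRingEnd ℂ) (ψ w) with hPmdef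
  have hPmH : Pmᴴ = Pm := by
    ext x w
    simp only [hPmdef, Matrix.conjTranspose_apply, Matrix.of_apply, Complex.star_def,
      _root_.map_mul, Complex.conj_conj]
    ring
  have hnormC : (∑ u : Fin n → ZMod 2, (starRingEnd ℂ) (ψ u) * ψ u) = 1 := by
    have : ∀ u : Fin n → ZMod 2, (starRingEnd ℂ) (ψ u) * ψ u
        = ((‖ψ u‖ ^ 2 : ℝ) : ℂ) := by
      intro u
      rw [mul_comm, Complex.mul_conj, Complex.sq_norm]
      try norm_cast
    rw [Finset.sum_congr rfl fun u _ => this u, ← Complex.ofReal_sum, hnorm,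
      Complex.ofReal_one]
  have htrPm : Matrix.trace Pm = 1 := by
    rw [Matrix.trace, ← hnormC]
    refine Finset.sum_congr rfl fun u _ => ?_
    simp only [Matrix.diag, hPmdef, Matrix.of_apply]
    try ring
  have hAPm : A * Pm = (2 ^ n : ℂ) • Pm := by
    ext x w
    have := congrFun hAvec x
    simp only [Matrix.mulVec, dotProduct, Pi.smul_apply, smul_eq_mul] at this
    simp only [Matrix.mul_apply, hPmdef, Matrix.of_apply, Matrix.smul_apply, smul_eq_mul]
    calc ∑ u, A x u * (ψ u * (starRingEnd ℂ) (ψ w))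
        = (∑ u, A x u * ψ u) * (starRingEnd ℂ) (ψ w) := by rw [Finset.sum_mul]; refine Finset.sum_congr rfl fun u _ => by ring
      _ = (2 ^ n : ℂ) * (ψ x * (starRingEnd ℂ) (ψ w)) := by rw [this]; ring
  have hPmA : Pm * A = (2 ^ n : ℂ) • Pm := by
    ext x w
    have h1 := congrFun hAvec w
    simp only [Matrix.mulVec, dotProduct, Pi.smul_apply, smul_eq_mul] at h1
    have h2 : ∑ u, (starRingEnd ℂ) (ψ u) * A u w
        = (starRingEnd ℂ) ((2 ^ n : ℂ) * ψ w) := by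
      rw [← h1, _root_.map_sum]
      refine Finset.sum_congr rfl fun u _ => ?_
      rw [_root_.map_mul]
      have h3 : (starRingEnd ℂ) (A w u) = A u w := by
        have h4 := congrFun (congrFun hAH u) w
        rw [Matrix.conjTranspose_apply] at h4
        exact h4
      rw [← h3]
      ring
    simp only [Matrix.mul_apply, hPmdef, Matrix.of_apply, Matrix.smul_apply, smul_eq_mul]
    calc ∑ u, ψ x * (starRingEnd ℂ) (ψ u) * A u w
        = ψ x * ∑ u, (starRingEnd ℂ) (ψ u) * A u w := by
          rw [Finset.mul_sum]; refine Finset.sum_congr rfl fun u _ => by ring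
      _ = (2 ^ n : ℂ) * (ψ x * (starRingEnd ℂ) (ψ w)) := by
          rw [h2, _root_.map_mul]
          have hc2 : (starRingEnd ℂ) ((2 : ℂ) ^ n) = (2 : ℂ) ^ n := by
            rw [map_pow, Complex.conj_ofNat]
          rw [hc2]; ring
  have hPmPm : Pm * Pm = Pm := by
    ext x w
    simp only [Matrix.mul_apply, hPmdef, Matrix.of_apply]
    calc ∑ u, ψ x * (starRingEnd ℂ) (ψ u) * (ψ u * (starRingEnd ℂ) (ψ w))
        = (ψ x * (starRingEnd ℂ) (ψ w)) * ∑ u, (starRingEnd ℂ) (ψ u) * ψ u := by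
          rw [Finset.mul_sum]; refine Finset.sum_congr rfl fun u _ => by ring
      _ = ψ x * (starRingEnd ℂ) (ψ w) := by rw [hnormC, mul_one]
  -- B := A - 2^n Pm is zero
  set B : Matrix (Fin n → ZMod 2) (Fin n → ZMod 2) ℂ := A - (2 ^ n : ℂ) • Pm with hBdef
  have hBH : Bᴴ = B := by
    rw [hBdef, Matrix.conjTranspose_sub, hAH, Matrix.conjTranspose_smul, hPmH]
    congr 1
    simp
  have hBB : B * B = (2 ^ n : ℂ) • B := by
    rw [hBdef]
    rw [Matrix.sub_mul, Matrix.mul_sub, Matrix.mul_sub, Matrix.smul_mul, Matrix.mul_smul,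
      Matrix.mul_smul, Matrix.smul_mul, hAA, hAPm, hPmA, hPmPm, smul_smul, smul_sub, smul_smul]
    module
  have htrB : Matrix.trace B = 0 := by
    rw [hBdef, Matrix.trace_sub, Matrix.trace_smul, htrA, htrPm, smul_eq_mul, mul_one, sub_self]
  have hB0 : B = 0 := by
    have h1 : Matrix.trace (Bᴴ * B) = 0 := by
      rw [hBH, hBB, Matrix.trace_smul, htrB, smul_zero]
    have h2 : Matrix.trace (Bᴴ * B)
        = ((∑ j, ∑ i, Complex.normSq (B i j) : ℝ) : ℂ) := by
      rw [Matrix.trace]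
      push_cast
      refine Finset.sum_congr rfl fun j _ => ?_
      rw [Matrix.diag, Matrix.mul_apply]
      refine Finset.sum_congr rfl fun i _ => ?_
      rw [Matrix.conjTranspose_apply]
      rw [Complex.normSq_eq_conj_mul_self]
      rfl
    rw [h2, Complex.ofReal_eq_zero] at h1
    have hzero : ∀ j, ∀ i, Complex.normSq (B i j) = 0 := by
      have hnn : ∀ j ∈ Finset.univ, (0:ℝ) ≤ ∑ i, Complex.normSq (B i j) :=
        fun j _ => Finset.sum_nonneg fun i _ => Complex.normSq_nonneg _
      intro j i
      have hj := (Finset.sum_eq_zero_iff_of_nonneg hnn).mp h1 j (Finset.mem_univ j)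
      exact (Finset.sum_eq_zero_iff_of_nonneg
        (fun i _ => Complex.normSq_nonneg _)).mp hj i (Finset.mem_univ i)
    ext i j
    simpa using Complex.normSq_eq_zero.mp (hzero j i)
  have hAeq : A = (2 ^ n : ℂ) • Pm := by
    have := sub_eq_zero.mp hB0
    exact this
  -- now evaluate the (z, y) entry
  set T : Finset (PauliParam n) := Finset.univ.filter fun q : PauliParam n =>
      PauliOp' q *ᵥ ψ = ψ ∧ y + q.2.2.1 = z with hTdef
  have hTmem : ∀ q : PauliParam n, q ∈ T ↔ (PauliOp' q *ᵥ ψ = ψ ∧ y + q.2.2.1 = z) := by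
    intro q; simp [hTdef]
  have hTS : T ⊆ S := fun q hq => (hSmem q).mpr ((hTmem q).mp hq).1
  have hAzy : A z y = ∑ q ∈ T, PauliOp' q z y := by
    rw [hAdef]
    have : ∀ q ∈ S, q ∉ T → PauliOp' q z y = 0 := by
      intro q hq hqT
      refine RSS.entry_zero fun hc => hqT ((hTmem q).mpr ⟨(hSmem q).mp hq, hc⟩)
    rw [Matrix.sum_apply]
    exact (Finset.sum_subset hTS this).symm
  have hkey : ∀ q ∈ T, PauliOp' q z y * ψ y = ψ z := by
    intro q hq
    obtain ⟨h1, h2⟩ := (hTmem q).mp hq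
    exact RSS.stab_entry h1 h2
  have hsumT : (∑ q ∈ T, PauliOp' q z y) * ψ y = (T.card : ℂ) * ψ z := by
    rw [Finset.sum_mul, Finset.sum_congr rfl hkey, Finset.sum_const, nsmul_eq_mul]
  have hAentry : A z y = (2 ^ n : ℂ) * (ψ z * (starRingEnd ℂ) (ψ y)) := by
    rw [hAeq]
    simp only [Matrix.smul_apply, hPmdef, Matrix.of_apply, smul_eq_mul]
  have hmain : (T.card : ℂ) * ψ z
      = (2 ^ n : ℂ) * ψ z * ((‖ψ y‖ ^ 2 : ℝ) : ℂ) := by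
    rw [← hsumT, ← hAzy, hAentry]
    have : ((‖ψ y‖ ^ 2 : ℝ) : ℂ) = ψ y * (starRingEnd ℂ) (ψ y) := by
      rw [Complex.mul_conj, Complex.sq_norm]
    rw [this]; ring
  by_cases hz : ψ z = 0
  · have hTempty : T = ∅ := by
      rw [Finset.eq_empty_iff_forall_notMem]
      intro q hq
      have hkq := hkey q hq
      rw [hz] at hkq
      rcases mul_eq_zero.mp hkq with h | h
      · have habs := RSS.abs_entry ((hTmem q).mp hq).2
        rw [h] at habs
        simp at habs
      · exact hy h
    rw [hTempty, hz]
    simp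
  · rcases Finset.eq_empty_or_nonempty T with hT | hTne
    · exfalso
      have h0 : (0 : ℂ) = (2 ^ n : ℂ) * ψ z * ((‖ψ y‖ ^ 2 : ℝ) : ℂ) := by
        simpa [hT] using hmain
      have habs0 : ((‖ψ y‖ ^ 2 : ℝ) : ℂ) = 0 := by
        rcases mul_eq_zero.mp h0.symm with h | h
        · rcases mul_eq_zero.mp h with h' | h'
          · exact absurd h' (pow_ne_zero _ two_ne_zero)
          · exact absurd h' hz
        · exact h
      have habs1 : ‖ψ y‖ ^ 2 = 0 := by exact_mod_cast habs0
      have habs2 : ‖ψ y‖ = 0 := by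
        exact pow_eq_zero_iff (two_ne_zero) |>.mp habs1
      exact hy (norm_eq_zero.mp habs2)
    · obtain ⟨q, hq⟩ := hTne
      have hkq := hkey q hq
      have habs := RSS.abs_entry ((hTmem q).mp hq).2
      have habseq : ‖ψ z‖ = ‖ψ y‖ := by
        rw [← hkq, norm_mul, habs, one_mul]
      have hc : (T.card : ℂ) = (2 ^ n : ℂ) * ((‖ψ y‖ ^ 2 : ℝ) : ℂ) := by
        have hmain' : (T.card : ℂ) * ψ z
            = ((2 ^ n : ℂ) * ((‖ψ y‖ ^ 2 : ℝ) : ℂ)) * ψ z := by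
          linear_combination hmain
        exact mul_right_cancel₀ hz hmain'
      rw [← habseq] at hc
      exact_mod_cast hc
end

section
/- Suppose ψ is an n-qubit stabilizer state and x, y ∈ {0,1}^n satisfy ⟨x|ψ⟩ ≠ 0 and ⟨y|ψ⟩ ≠ 0. Then there exists a Pauli operator P in the stabilizer group of ψ such that P|x⟩ is proportional to |y⟩. -/
open Matrix

/-- The computational basis state `|x⟩` as an amplitude vector. -/
def ket {n : ℕ} (x : Fin n → ZMod 2) : (Fin n → ZMod 2) → ℂ :=
  Pi.single x 1


-- helpers
lemma zmod2_add_self (t : ZMod 2) : t + t = 0 := by revert t; decide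

lemma vadd_self {n : ℕ} (v : Fin n → ZMod 2) : v + v = 0 :=
  funext fun i => zmod2_add_self (v i)

lemma vadd_add_self {n : ℕ} (v w : Fin n → ZMod 2) : v + w + w = v := by
  have : v + w + w = v + (w + w) := by abel
  rw [this, vadd_self, add_zero]

lemma neg_one_pow_zmod_add (s t : ZMod 2) :
    ((-1:ℂ))^((s+t).val) = (-1:ℂ)^s.val * (-1:ℂ)^t.val := by
  rw [ZMod.val_add, ← neg_one_pow_eq_pow_mod_two, pow_add]

lemma neg_one_pow_zmod_mul_self (t : ZMod 2) :
    ((-1:ℂ))^t.val * ((-1:ℂ))^t.val = 1 := by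
  rw [← pow_add, neg_one_pow_eq_pow_mod_two]
  have h : (t.val + t.val) % 2 = 0 := by omega
  rw [h, pow_zero]

lemma zmod_eq_zero_of_neg_one_pow (t : ZMod 2) (h : ((-1:ℂ))^t.val = 1) : t = 0 := by
  fin_cases t
  · rfl
  · exfalso; norm_num [ZMod.val] at h

lemma scalar_inj {α β α' β' : ZMod 2}
    (h : Complex.I ^ α.val * (-1:ℂ) ^ β.val = Complex.I ^ α'.val * (-1:ℂ) ^ β'.val) :
    α = α' ∧ β = β' := by
  fin_cases α <;> fin_cases β <;> fin_cases α' <;> fin_cases β' <;>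
    simp_all [ZMod.val, Complex.ext_iff] <;> norm_num at * <;> and_intros <;> rfl

lemma scalar_ne_zero (α β : ZMod 2) : Complex.I ^ α.val * (-1:ℂ) ^ β.val ≠ 0 :=
  mul_ne_zero (pow_ne_zero _ Complex.I_ne_zero) (pow_ne_zero _ (by norm_num))

lemma Pauli_mulVec_apply {n : ℕ} (α β : ZMod 2) (a b : Fin n → ZMod 2)
    (ψ : (Fin n → ZMod 2) → ℂ) (z : Fin n → ZMod 2) :
    (PauliOp α β a b *ᵥ ψ) z =
      (Complex.I ^ α.val * (-1:ℂ) ^ β.val) * ((-1:ℂ)^((b ⬝ᵥ (z+a)).val) * ψ (z+a)) := by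
  classical
  rw [PauliOp, Matrix.smul_mulVec]
  have : (XZ a b *ᵥ ψ) z = (-1:ℂ)^((b ⬝ᵥ (z+a)).val) * ψ (z+a) := by
    unfold XZ
    simp only [mulVec, dotProduct, of_apply]
    rw [Finset.sum_eq_single (z+a)]
    · rw [if_pos (vadd_add_self z a).symm]
    · intro w _ hw
      rw [if_neg, zero_mul]
      intro hzw
      exact hw (by rw [hzw, vadd_add_self])
    · intro h; exact absurd (Finset.mem_univ _) h
  rw [Pi.smul_apply, this, smul_eq_mul]

lemma Pauli_mulVec_ket {n : ℕ} (α β : ZMod 2) (a b x : Fin n → ZMod 2) :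
    PauliOp α β a b *ᵥ ket x =
      ((Complex.I ^ α.val * (-1:ℂ) ^ β.val) * (-1:ℂ)^((b ⬝ᵥ x).val)) • ket (x + a) := by
  funext z
  rw [Pauli_mulVec_apply]
  simp only [ket, Pi.smul_apply, Pi.single_apply, smul_eq_mul]
  by_cases h : z = x + a
  · subst h
    rw [vadd_add_self, if_pos rfl, if_pos rfl]
    ring
  · have h' : ¬ (z + a = x) := fun hc => h (hc ▸ (vadd_add_self z a)).symm
    rw [if_neg h', if_neg h]
    ring

set_option synthInstance.maxHeartbeats 1000000
set_option maxHeartbeats 1000000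

open Classical in
lemma card_mul_card_ann {n : ℕ} (U : Submodule (ZMod 2) (Fin n → ZMod 2)) :
    ∃ W : Submodule (ZMod 2) (Fin n → ZMod 2),
      (∀ v, v ∈ W ↔ ∀ u ∈ U, v ⬝ᵥ u = 0) ∧
      Nat.card ↥U * Nat.card ↥W = 2 ^ n := by
  classical
  set bV := Pi.basisFun (ZMod 2) (Fin n) with hbV
  have htoDual : ∀ v w : Fin n → ZMod 2, bV.toDual v w = v ⬝ᵥ w := by
    intro v w
    calc bV.toDual v w = bV.toDual v (∑ i, bV.repr w i • bV i) := by rw [Module.Basis.sum_repr]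
      _ = ∑ i, bV.repr w i * bV.repr v i := by
          simp [-Module.Basis.sum_repr, map_sum, _root_.map_smul, Module.Basis.toDual_apply_left, smul_eq_mul]
      _ = v ⬝ᵥ w := by simp [hbV, Pi.basisFun_repr, dotProduct, mul_comm]
  refine ⟨Submodule.comap bV.toDualEquiv.toLinearMap U.dualAnnihilator, ?_, ?_⟩
  · intro v
    simp only [Submodule.mem_comap, LinearEquiv.coe_coe, Module.Basis.toDualEquiv_apply,
      Submodule.mem_dualAnnihilator, htoDual]
  · have hfr : Module.finrank (ZMod 2) ↥(Submodule.comap bV.toDualEquiv.toLinearMap U.dualAnnihilator)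
        = Module.finrank (ZMod 2) ↥U.dualAnnihilator := by
      rw [Submodule.comap_equiv_eq_map_symm]
      exact (LinearEquiv.finrank_eq (bV.toDualEquiv.symm.submoduleMap U.dualAnnihilator)).symm
    have hann : Module.finrank (ZMod 2) ↥U.dualAnnihilator
        = Module.finrank (ZMod 2) ((Fin n → ZMod 2) ⧸ U) :=
      (LinearEquiv.finrank_eq (Subspace.quotEquivAnnihilator U)).symm
    have hq : Module.finrank (ZMod 2) ((Fin n → ZMod 2) ⧸ U)
        + Module.finrank (ZMod 2) ↥U = n := by
      rw [Submodule.finrank_quotient_add_finrank, Module.finrank_fin_fun]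
    have c1 : Nat.card ↥U = 2 ^ Module.finrank (ZMod 2) ↥U := by
      rw [Nat.card_eq_fintype_card, Module.card_eq_pow_finrank (K := ZMod 2), ZMod.card]
    have c2 : Nat.card ↥(Submodule.comap bV.toDualEquiv.toLinearMap U.dualAnnihilator)
        = 2 ^ Module.finrank (ZMod 2) ↥(Submodule.comap bV.toDualEquiv.toLinearMap U.dualAnnihilator) := by
      rw [Nat.card_eq_fintype_card, Module.card_eq_pow_finrank (K := ZMod 2), ZMod.card]
    rw [c1, c2, hfr, hann, ← pow_add]
    congr 1
    omega

lemma cancel_lemma {s1 s2 e1z e2z e1x e2x : ℂ} (hs1 : s1 ≠ 0)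
    (h1 : s1 * e1z = s2 * e2z) (h2 : s1 * e1x = s2 * e2x)
    (q2z : e2z * e2z = 1) (q1x : e1x * e1x = 1) (q2x : e2x * e2x = 1) :
    e1z * e1x * (e2z * e2x) = 1 := by
  have hsq : s1 * s1 = s2 * s2 := by
    calc s1 * s1 = (s1 * s1) * (e1x * e1x) := by rw [q1x, mul_one]
      _ = (s1 * e1x) * (s1 * e1x) := by ring
      _ = (s2 * e2x) * (s2 * e2x) := by rw [h2]
      _ = (s2 * s2) * (e2x * e2x) := by ring
      _ = s2 * s2 := by rw [q2x, mul_one]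
  have h12 : (s1 * s1) * (e1z * e1x) = (s1 * s1) * (e2z * e2x) := by
    calc (s1 * s1) * (e1z * e1x) = (s1 * e1z) * (s1 * e1x) := by ring
      _ = (s2 * e2z) * (s2 * e2x) := by rw [h1, h2]
      _ = (s2 * s2) * (e2z * e2x) := by ring
      _ = (s1 * s1) * (e2z * e2x) := by rw [hsq]
  rw [mul_left_cancel₀ (mul_ne_zero hs1 hs1) h12]
  calc (e2z * e2x) * (e2z * e2x) = (e2z * e2z) * (e2x * e2x) := by ring
    _ = 1 := by rw [q2z, q2x, mul_one]


open Classical in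
/-- If `ψ` is an `n`-qubit stabilizer state (normalized, with stabilizer group of
size `2^n`) and `x, y` satisfy `⟨x|ψ⟩ ≠ 0` and `⟨y|ψ⟩ ≠ 0`, then there is a Pauli
operator `P` stabilizing `ψ` with `P|x⟩ ∝ |y⟩`. -/
theorem exists_stabilizer_mapping {n : ℕ} (ψ : (Fin n → ZMod 2) → ℂ)
    (hnorm : ∑ z, ‖ψ z‖ ^ 2 = 1)
    (hcard : (Finset.univ.filter fun q : PauliParam n => PauliOp' q *ᵥ ψ = ψ).card = 2 ^ n)
    (x y : Fin n → ZMod 2) (hx : ψ x ≠ 0) (hy : ψ y ≠ 0) :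
    ∃ (α β : ZMod 2) (a b : Fin n → ZMod 2) (c : ℂ), c ≠ 0 ∧
      PauliOp α β a b *ᵥ ψ = ψ ∧ PauliOp α β a b *ᵥ ket x = c • ket y := by
  classical
  set S := Finset.univ.filter fun q : PauliParam n => PauliOp' q *ᵥ ψ = ψ with hSdef
  have hrel : ∀ q ∈ S, ∀ z,
      ψ z = (Complex.I ^ q.1.val * (-1:ℂ) ^ q.2.1.val) *
        ((-1:ℂ)^((q.2.2.2 ⬝ᵥ (z + q.2.2.1)).val) * ψ (z + q.2.2.1)) := by
    intro q hq z
    have h := (Finset.mem_filter.mp hq).2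
    conv_lhs => rw [← h]
    exact Pauli_mulVec_apply _ _ _ _ ψ z
  have hsupp : ∀ q ∈ S, ∀ z, ψ z ≠ 0 → ψ (z + q.2.2.1) ≠ 0 := by
    intro q hq z hz h0
    exact hz (by rw [hrel q hq z, h0, mul_zero, mul_zero])
  set T : Set (Fin n → ZMod 2) := {v | ψ (v + x) ≠ 0} with hTdef
  set U : Submodule (ZMod 2) (Fin n → ZMod 2) := Submodule.span (ZMod 2) T with hUdef
  have hmemT : ∀ z, ψ z ≠ 0 → z + x ∈ T := by
    intro z hz
    show ψ (z + x + x) ≠ 0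
    rwa [vadd_add_self]
  have haU : ∀ q ∈ S, q.2.2.1 ∈ U := by
    intro q hq
    have h2 : (x + q.2.2.1) + x ∈ T := hmemT _ (hsupp q hq x hx)
    have h3 : (x + q.2.2.1) + x = q.2.2.1 := by
      rw [add_comm x q.2.2.1, vadd_add_self]
    exact h3 ▸ Submodule.subset_span h2
  obtain ⟨W, hmemW, hUW⟩ := card_mul_card_ann U
  have hkey : ∀ q ∈ S, ∀ q' ∈ S, q.2.2.1 = q'.2.2.1 →
      (q.2.2.2 + q'.2.2.2) ∈ W ∧ (q.2.2.2 = q'.2.2.2 → q = q') := by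
    rintro ⟨α, β, a, b⟩ hq ⟨α', β', a', b'⟩ hq' ha
    dsimp only at ha ⊢
    subst ha
    set s1 := Complex.I ^ α.val * (-1:ℂ) ^ β.val with hs1def
    set s2 := Complex.I ^ α'.val * (-1:ℂ) ^ β'.val with hs2def
    have hs1 : s1 ≠ 0 := scalar_ne_zero α β
    have heqz : ∀ z, ψ z ≠ 0 →
        s1 * (-1:ℂ)^((b ⬝ᵥ (z + a)).val) = s2 * (-1:ℂ)^((b' ⬝ᵥ (z + a)).val) := by
      intro z hz
      have h1 := (hrel (α, β, a, b) hq z).symm.trans (hrel (α', β', a, b') hq' z)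
      dsimp only at h1
      rw [← mul_assoc, ← mul_assoc] at h1
      exact mul_right_cancel₀ (hsupp (α, β, a, b) hq z hz) h1
    constructor
    · rw [hmemW]
      have hTsub : ∀ v ∈ T, (b + b') ⬝ᵥ v = 0 := by
        intro v hv
        have h1 := heqz (v + x) hv
        have h2 := heqz x hx
        apply zmod_eq_zero_of_neg_one_pow
        have hv4 : v + x + a + (x + a) = v := by
          have h5 : v + x + a + (x + a) = v + (x + x) + (a + a) := by abel
          rw [h5, vadd_self, vadd_self, add_zero, add_zero]
        have hb1 : b ⬝ᵥ v = b ⬝ᵥ (v + x + a) + b ⬝ᵥ (x + a) := by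
          conv_lhs => rw [← hv4]
          rw [dotProduct_add]
        have hb2 : b' ⬝ᵥ v = b' ⬝ᵥ (v + x + a) + b' ⬝ᵥ (x + a) := by
          conv_lhs => rw [← hv4]
          rw [dotProduct_add]
        rw [add_dotProduct, neg_one_pow_zmod_add, hb1, hb2,
          neg_one_pow_zmod_add, neg_one_pow_zmod_add]
        exact cancel_lemma hs1 h1 h2 (neg_one_pow_zmod_mul_self _)
          (neg_one_pow_zmod_mul_self _) (neg_one_pow_zmod_mul_self _)
      let φ : (Fin n → ZMod 2) →ₗ[ZMod 2] ZMod 2 :=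
        { toFun := fun u => (b + b') ⬝ᵥ u
          map_add' := fun u v => dotProduct_add _ _ _
          map_smul' := fun c u => by simp }
      have hUle : U ≤ LinearMap.ker φ := Submodule.span_le.mpr fun v hv => hTsub v hv
      exact fun u hu => hUle hu
    · intro hb
      subst hb
      have h2 := heqz x hx
      have hs : s1 = s2 :=
        mul_right_cancel₀ (pow_ne_zero _ (by norm_num : (-1:ℂ) ≠ 0)) h2
      obtain ⟨hα, hβ⟩ := scalar_inj hs
      rw [hα, hβ]
  let base : (Fin n → ZMod 2) → PauliParam n := fun a =>
    if h : ∃ p, p ∈ S ∧ p.2.2.1 = a then h.choose else (0, 0, 0, 0)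
  have hbase : ∀ a, (∃ p, p ∈ S ∧ p.2.2.1 = a) → base a ∈ S ∧ (base a).2.2.1 = a := by
    intro a h
    simp only [base, dif_pos h]
    exact h.choose_spec
  let f : {q : PauliParam n // q ∈ S} → ↥U × ↥W := fun q =>
    (⟨q.1.2.2.1, haU q.1 q.2⟩,
     ⟨q.1.2.2.2 + (base q.1.2.2.1).2.2.2, by
        have hb := hbase q.1.2.2.1 ⟨q.1, q.2, rfl⟩
        exact (hkey q.1 q.2 (base q.1.2.2.1) hb.1 hb.2.symm).1⟩)
  have hinj : Function.Injective f := by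
    intro q q' h
    have h1 : q.1.2.2.1 = q'.1.2.2.1 := congrArg (fun p => (p.1 : Fin n → ZMod 2)) h
    have h2 : q.1.2.2.2 + (base q.1.2.2.1).2.2.2 = q'.1.2.2.2 + (base q'.1.2.2.1).2.2.2 :=
      congrArg (fun p => (p.2 : Fin n → ZMod 2)) h
    rw [h1] at h2
    exact Subtype.ext ((hkey q.1 q.2 q'.1 q'.2 h1).2 (add_right_cancel h2))
  have hbij : Function.Bijective f := by
    rw [Fintype.bijective_iff_injective_and_card]
    refine ⟨hinj, ?_⟩
    rw [Fintype.card_of_subtype S (fun _ => Iff.rfl), hcard, Fintype.card_prod,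
      ← Nat.card_eq_fintype_card, ← Nat.card_eq_fintype_card, hUW]
  have hxyU : x + y ∈ U := by
    rw [add_comm]
    exact Submodule.subset_span (hmemT y hy)
  obtain ⟨q, hq⟩ := hbij.2 (⟨x + y, hxyU⟩, ⟨0, W.zero_mem⟩)
  have ha : q.1.2.2.1 = x + y := congrArg (fun p => (p.1 : Fin n → ZMod 2)) hq
  refine ⟨q.1.1, q.1.2.1, q.1.2.2.1, q.1.2.2.2,
    (Complex.I ^ q.1.1.val * (-1:ℂ) ^ q.1.2.1.val) * (-1:ℂ)^((q.1.2.2.2 ⬝ᵥ x).val),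
    mul_ne_zero (scalar_ne_zero _ _) (pow_ne_zero _ (by norm_num)), ?_, ?_⟩
  · exact (Finset.mem_filter.mp q.2).2
  · rw [Pauli_mulVec_ket]
    have hxy : x + q.1.2.2.1 = y := by
      rw [ha, ← add_assoc, vadd_self, zero_add]
    rw [hxy]
end

section
/- Let G = (V,E) be a graph with n vertices, and let T be a nice tree decomposition of G with O(n) nodes and width t in which every node has at most two children. Then there is a tree decomposition T' of G with at most n/t edges (hence O(n/t) nodes) and width at most 5t, obtained by the following procedure: process nodes bottom-up, contracting each child into its parent whenever the child's bag has at most 2t vertices. -/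
/-- A tree decomposition of a graph `G`. -/
structure IsTreeDecomp {V ι : Type} (G : SimpleGraph V) (T : SimpleGraph ι)
    (bags : ι → Finset V) : Prop where
  isTree : T.IsTree
  mem_bag : ∀ v : V, ∃ i, v ∈ bags i
  edge_bag : ∀ u v : V, G.Adj u v → ∃ i, u ∈ bags i ∧ v ∈ bags i
  subtree : ∀ v : V, (T.induce {i | v ∈ bags i}).Connected



set_option linter.unusedSectionVars false
set_option maxHeartbeats 1600000

open SimpleGraph

namespace CoarseTD


/-- The graph induced by a parent map. -/
def pg {α : Type} (π : α → α) : SimpleGraph α where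
  Adj a b := a ≠ b ∧ (π a = b ∨ π b = a)
  symm := by
    refine ⟨?_⟩; intro a b ⟨h1, h2⟩
    exact ⟨h1.symm, h2.symm⟩
  loopless := by refine ⟨?_⟩; intro a ⟨h1, _⟩; exact h1 rfl

lemma pg_adj {α : Type} (π : α → α) {a b : α} :
    (pg π).Adj a b ↔ a ≠ b ∧ (π a = b ∨ π b = a) := Iff.rfl

private lemma pg_no_cycle_at_max {α : Type} (π : α → α) (ρ : α → ℕ)
    (h : ∀ a, π a = a ∨ ρ (π a) < ρ a) {m : α} (c' : (pg π).Walk m m)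
    (hc' : c'.IsCycle) (hmax : ∀ z ∈ c'.support, ρ z ≤ ρ m) : False := by
  rcases c' with _ | ⟨hadj, q⟩
  · exact hc'.ne_nil rfl
  · rename_i y
    have hmy : m ≠ y := hadj.1
    have hqrev : ¬ q.reverse.Nil := by
      intro hn
      rw [SimpleGraph.Walk.nil_iff_length_eq, SimpleGraph.Walk.length_reverse] at hn
      exact hmy (SimpleGraph.Walk.eq_of_length_eq_zero hn).symm
    obtain ⟨z, hz, q2, hq2⟩ := SimpleGraph.Walk.not_nil_iff.mp hqrev
    -- z is the penultimate vertex
    have hzq : s(m, z) ∈ q.edges := by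
      have h1 : s(m, z) ∈ q.reverse.edges := by
        rw [hq2, SimpleGraph.Walk.edges_cons]
        exact List.mem_cons_self
      rwa [SimpleGraph.Walk.edges_reverse, List.mem_reverse] at h1
    have hyz : y ≠ z := by
      intro hyz
      subst hyz
      have hnodup := hc'.edges_nodup
      rw [SimpleGraph.Walk.edges_cons] at hnodup
      exact (List.nodup_cons.mp hnodup).1 hzq
    have hzsupp : z ∈ q.support := by
      have h1 : z ∈ q.reverse.support := by
        rw [hq2, SimpleGraph.Walk.support_cons]
        exact List.mem_cons_of_mem _ q2.start_mem_support
      rwa [SimpleGraph.Walk.support_reverse, List.mem_reverse] at h1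
    have hρy : ρ y ≤ ρ m := hmax y (by
      rw [SimpleGraph.Walk.support_cons]
      exact List.mem_cons_of_mem _ q.start_mem_support)
    have hρz : ρ z ≤ ρ m := hmax z (by
      rw [SimpleGraph.Walk.support_cons]
      exact List.mem_cons_of_mem _ hzsupp)
    have hπmy : π m = y := by
      rcases hadj.2 with h1 | h1
      · exact h1
      · rcases h y with h2 | h2
        · rw [h2] at h1; exact absurd h1.symm hmy
        · rw [h1] at h2; omega
    have hπmz : π m = z := by
      rcases hz.2 with h1 | h1
      · exact h1
      · rcases h z with h2 | h2
        · rw [h2] at h1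
          exact absurd h1.symm (fun hh => hz.1 hh)
        · rw [h1] at h2; omega
    exact hyz (hπmy ▸ hπmz)

lemma pg_acyclic {α : Type} (π : α → α) (ρ : α → ℕ)
    (h : ∀ a, π a = a ∨ ρ (π a) < ρ a) : (pg π).IsAcyclic := by
  intro x c hc
  classical
  have hne : c.support.toFinset.Nonempty := ⟨x, by simp⟩
  obtain ⟨m, hm, hmax⟩ := Finset.exists_max_image c.support.toFinset ρ hne
  rw [List.mem_toFinset] at hm
  refine pg_no_cycle_at_max π ρ h (c.rotate m hm) (hc.rotate hm) ?_
  intro z hz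
  by_cases hzm : z = m
  · subst hzm; exact le_rfl
  · have hrot := SimpleGraph.Walk.support_rotate c m hm
    have hztail : z ∈ (c.rotate m hm).support.tail := by
      have hcons := SimpleGraph.Walk.support_eq_cons (c.rotate m hm)
      rw [hcons] at hz
      rcases List.mem_cons.mp hz with h1 | h1
      · exact absurd h1 hzm
      · exact h1
    have hz2 : z ∈ c.support.tail := hrot.mem_iff.1 hztail
    exact hmax z (List.mem_toFinset.2 (List.mem_of_mem_tail hz2))

lemma pg_connected {α : Type} [Nonempty α] (π : α → α) (ρ : α → ℕ) (root : α)
    (h : ∀ a, a ≠ root → ρ (π a) < ρ a) : (pg π).Connected := by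
  have hreach : ∀ a, (pg π).Reachable a root := by
    suffices H : ∀ n a, ρ a = n → (pg π).Reachable a root from fun a => H _ a rfl
    intro n
    induction n using Nat.strong_induction_on with
    | _ n IH =>
      intro a hn
      by_cases ha : a = root
      · subst ha; rfl
      · have hlt := h a ha
        have hne : a ≠ π a := by
          intro he
          rw [← he] at hlt
          omega
        have : (pg π).Adj a (π a) := ⟨hne, Or.inl rfl⟩
        exact (this.reachable).trans (IH (ρ (π a)) (by omega) (π a) rfl)
  exact ⟨fun a b => (hreach a).trans (hreach b).symm⟩

/-- Pushing connectivity forward along a map. -/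
lemma push_conn {α β : Type} {A : SimpleGraph α} {B : SimpleGraph β} (g : α → β)
    {S : Set α} {S' : Set β} (hconn : (A.induce S).Connected)
    (himg : ∀ j, j ∈ S → g j ∈ S') (hsur : ∀ a ∈ S', ∃ j ∈ S, g j = a)
    (hpush : ∀ x y, A.Adj x y → g x = g y ∨ B.Adj (g x) (g y)) :
    (B.induce S').Connected := by
  have hne : Nonempty ↥S := hconn.nonempty
  obtain ⟨x, hx⟩ := hne
  have key : ∀ (u w : ↥S) (_p : (A.induce S).Walk u w),
      (B.induce S').Reachable ⟨g u.1, himg _ u.2⟩ ⟨g w.1, himg _ w.2⟩ := by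
    intro u w p
    induction p with
    | nil => rfl
    | @cons u' x' w' hadj p IHp =>
      have hadj' : A.Adj u'.1 x'.1 := hadj
      rcases hpush _ _ hadj' with heq | hBadj
      · have : (⟨g u'.1, himg _ u'.2⟩ : ↥S') = ⟨g x'.1, himg _ x'.2⟩ := Subtype.ext heq
        rw [this]
        exact IHp
      · have hstep : (B.induce S').Adj ⟨g u'.1, himg _ u'.2⟩ ⟨g x'.1, himg _ x'.2⟩ := hBadj
        exact hstep.reachable.trans IHp
  have hne' : Nonempty ↥S' := ⟨⟨g x, himg x hx⟩⟩
  refine ⟨?_⟩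
  rintro ⟨a, ha⟩ ⟨b, hb⟩
  obtain ⟨ja, hja, rfl⟩ := hsur a ha
  obtain ⟨jb, hjb, rfl⟩ := hsur b hb
  obtain ⟨p⟩ := hconn.preconnected ⟨ja, hja⟩ ⟨jb, hjb⟩
  exact key _ _ p

section


variable {ι : Type} [Fintype ι] [DecidableEq ι]
variable (T : SimpleGraph ι) (hT : T.IsTree) (r : ι)

/-- The unique path from `i` to the root `r`. -/
noncomputable def P (i : ι) : T.Walk i r := (hT.existsUnique_path i r).choose

lemma P_isPath (i : ι) : (P T hT r i).IsPath := (hT.existsUnique_path i r).choose_spec.1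

lemma P_unique {i : ι} (q : T.Walk i r) (hq : q.IsPath) : q = P T hT r i :=
  (hT.existsUnique_path i r).choose_spec.2 q hq

noncomputable def parent (i : ι) : ι := (P T hT r i).getVert 1

noncomputable def depth (i : ι) : ℕ := (P T hT r i).length

lemma P_r : P T hT r r = Walk.nil := (P_unique T hT r Walk.nil (Walk.IsPath.nil)).symm

@[simp] lemma depth_r : depth T hT r r = 0 := by
  simp [depth, P_r]

lemma parent_r : parent T hT r r = r := by
  rw [parent, P_r]
  rfl

lemma P_cons {i : ι} (hi : i ≠ r) :
    ∃ h : T.Adj i (parent T hT r i),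
      P T hT r i = Walk.cons h (P T hT r (parent T hT r i)) := by
  rcases hp : P T hT r i with _ | ⟨h, q⟩
  · exact absurd rfl hi
  · rename_i j
    have hq : q.IsPath := by
      have := P_isPath T hT r i
      rw [hp] at this
      exact this.of_cons
    have hj : parent T hT r i = j := by
      rw [parent, hp]
      simp [Walk.getVert_cons_succ, Walk.getVert_zero]
    subst hj
    exact ⟨h, by rw [P_unique T hT r q hq]⟩

lemma adj_parent {i : ι} (hi : i ≠ r) : T.Adj i (parent T hT r i) :=
  (P_cons T hT r hi).1

lemma depth_parent {i : ι} (hi : i ≠ r) :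
    depth T hT r (parent T hT r i) + 1 = depth T hT r i := by
  obtain ⟨h, hP⟩ := P_cons T hT r hi
  simp [depth, hP]

lemma support_P_parent {i : ι} (hi : i ≠ r) :
    (P T hT r i).support = i :: (P T hT r (parent T hT r i)).support := by
  obtain ⟨h, hP⟩ := P_cons T hT r hi
  rw [hP, Walk.support_cons]

lemma depth_eq_zero_iff {i : ι} : depth T hT r i = 0 ↔ i = r := by
  constructor
  · intro h
    by_contra hi
    have := depth_parent T hT r hi
    omega
  · rintro rfl; simp

lemma self_mem_support (i : ι) : i ∈ (P T hT r i).support := Walk.start_mem_support _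

lemma r_mem_support (i : ι) : r ∈ (P T hT r i).support := Walk.end_mem_support _

lemma P_dropUntil {c j : ι} (h : c ∈ (P T hT r j).support) :
    (P T hT r j).dropUntil c h = P T hT r c :=
  P_unique T hT r _ ((P_isPath T hT r j).dropUntil h)

lemma support_subset_of_mem {c j : ι} (h : c ∈ (P T hT r j).support) :
    (P T hT r c).support ⊆ (P T hT r j).support := by
  rw [← P_dropUntil T hT r h]
  exact Walk.support_dropUntil_subset _ h

lemma depth_le_of_mem {c j : ι} (h : c ∈ (P T hT r j).support) :
    depth T hT r c ≤ depth T hT r j := by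
  have := Walk.take_spec (P T hT r j) h
  have hlen := congrArg Walk.length this
  rw [Walk.length_append] at hlen
  rw [depth, depth, ← P_dropUntil T hT r h]
  omega

lemma depth_lt_of_mem {c j : ι} (h : c ∈ (P T hT r j).support) (hne : c ≠ j) :
    depth T hT r c < depth T hT r j := by
  have hspec := Walk.take_spec (P T hT r j) h
  have hlen := congrArg Walk.length hspec
  rw [Walk.length_append] at hlen
  have h0 : ((P T hT r j).takeUntil c h).length ≠ 0 := by
    intro h0
    have := Walk.eq_of_length_eq_zero h0
    exact hne this.symm
  rw [depth, depth, ← P_dropUntil T hT r h]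
  omega

lemma depth_lt_card (i : ι) : depth T hT r i < Fintype.card ι := by
  have h := (P_isPath T hT r i).support_nodup.length_le_card
  rw [Walk.length_support] at h
  rw [depth]; omega

/-- For any edge of the tree, one endpoint is the parent of the other. -/
lemma parent_of_adj {i j : ι} (h : T.Adj i j) :
    j = parent T hT r i ∨ i = parent T hT r j := by
  by_cases hjP : j ∈ (P T hT r i).support
  · left
    -- takeUntil is the unique path from i to j, which must be the single edge
    have htake : ((P T hT r i).takeUntil j hjP).IsPath := (P_isPath T hT r i).takeUntil hjP
    have hsingle : (Walk.cons h Walk.nil : T.Walk i j).IsPath := by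
      simp [Walk.cons_isPath_iff, h.ne]
    obtain ⟨p, hp, hup⟩ := hT.existsUnique_path i j
    have h1 := hup _ htake
    have h2 := hup _ hsingle
    have heq : (P T hT r i).takeUntil j hjP = Walk.cons h Walk.nil := by rw [h1, ← h2]
    have hspec := Walk.take_spec (P T hT r i) hjP
    rw [heq] at hspec
    rw [parent, ← hspec]
    simp [Walk.getVert_cons_succ, Walk.getVert_zero]
  · right
    have hcons : (Walk.cons h.symm (P T hT r i)).IsPath := by
      rw [Walk.cons_isPath_iff]
      exact ⟨P_isPath T hT r i, hjP⟩
    have := P_unique T hT r _ hcons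
    rw [parent, ← this]
    simp [Walk.getVert_cons_succ, Walk.getVert_zero]

/-- The only tree edge crossing out of the set of descendants of `c` is `(c, parent c)`. -/
lemma crossing {x y c : ι} (h : T.Adj x y) (hx : c ∈ (P T hT r x).support)
    (hy : c ∉ (P T hT r y).support) : x = c ∧ y = parent T hT r c := by
  have hxr : x ≠ r := by
    intro hxr
    rw [hxr, P_r] at hx
    simp only [Walk.support_nil, List.mem_singleton] at hx
    rw [hx] at hy
    exact hy (r_mem_support T hT r y)
  rcases parent_of_adj T hT r h with h1 | h1
  · subst h1
    rw [support_P_parent T hT r hxr] at hx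
    rcases List.mem_cons.mp hx with h2 | h2
    · subst h2; exact ⟨rfl, rfl⟩
    · exact absurd h2 hy
  · have hyr : y ≠ r := by
      intro hy2
      rw [hy2, parent_r] at h1
      rw [h1, hy2] at h
      exact h.ne rfl
    subst h1
    exfalso
    apply hy
    rw [support_P_parent T hT r hyr]
    exact List.mem_cons_of_mem _ hx


noncomputable def children (i : ι) : Finset ι :=
  Finset.univ.filter (fun c => c ≠ r ∧ parent T hT r c = i)

lemma mem_children {c i : ι} :
    c ∈ children T hT r i ↔ c ≠ r ∧ parent T hT r c = i := by
  simp [children]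
variable {W : Type} [DecidableEq W] (bags : ι → Finset W) (t : ℕ)

noncomputable def mbag (i : ι) : Finset W :=
  bags i ∪ (children T hT r i).attach.biUnion (fun c =>
    if (mbag c.1).card ≤ 2 * t then mbag c.1 else ∅)
termination_by Fintype.card ι - depth T hT r i
decreasing_by
  all_goals {
    have hc := (mem_children T hT r).1 c.2
    have h1 := depth_parent T hT r hc.1
    rw [hc.2] at h1
    have h2 := depth_lt_card T hT r c.1
    omega }

lemma mbag_eq (i : ι) : mbag T hT r bags t i =
    bags i ∪ (children T hT r i).attach.biUnion (fun c =>
      if (mbag T hT r bags t c.1).card ≤ 2 * t then mbag T hT r bags t c.1 else ∅) := by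
  rw [mbag]

lemma bags_subset_mbag (i : ι) : bags i ⊆ mbag T hT r bags t i := by
  rw [mbag_eq]; exact Finset.subset_union_left

lemma mbag_subset_parent {i : ι} (hi : i ≠ r)
    (hcard : (mbag T hT r bags t i).card ≤ 2 * t) :
    mbag T hT r bags t i ⊆ mbag T hT r bags t (parent T hT r i) := by
  rw [mbag_eq T hT r bags t (parent T hT r i)]
  intro v hv
  apply Finset.mem_union_right
  rw [Finset.mem_biUnion]
  refine ⟨⟨i, (mem_children T hT r).2 ⟨hi, rfl⟩⟩, Finset.mem_attach _ _, ?_⟩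
  rw [if_pos hcard]
  exact hv

def kept (i : ι) : Prop := i = r ∨ 2 * t < (mbag T hT r bags t i).card

noncomputable instance : DecidablePred (kept T hT r bags t) := fun i =>
  instDecidableOr

noncomputable def f (i : ι) : ι :=
  if kept T hT r bags t i then i else f (parent T hT r i)
termination_by depth T hT r i
decreasing_by
  rename_i hk
  have hi : i ≠ r := fun h => hk (Or.inl h)
  have := depth_parent T hT r hi
  omega

lemma f_eq_of_kept {i : ι} (h : kept T hT r bags t i) : f T hT r bags t i = i := by
  rw [f, if_pos h]

lemma f_eq_of_not_kept {i : ι} (h : ¬ kept T hT r bags t i) :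
    f T hT r bags t i = f T hT r bags t (parent T hT r i) := by
  rw [f]; rw [if_neg h]

lemma kept_r : kept T hT r bags t r := Or.inl rfl

lemma kept_f (i : ι) : kept T hT r bags t (f T hT r bags t i) := by
  suffices H : ∀ n i, depth T hT r i = n → kept T hT r bags t (f T hT r bags t i) from
    H _ i rfl
  intro n
  induction n using Nat.strong_induction_on with
  | _ n IH =>
    intro i hn
    by_cases h : kept T hT r bags t i
    · rw [f_eq_of_kept T hT r bags t h]; exact h
    · have hi : i ≠ r := fun hh => h (Or.inl hh)
      rw [f_eq_of_not_kept T hT r bags t h]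
      have hd := depth_parent T hT r hi
      exact IH (depth T hT r (parent T hT r i)) (by omega) _ rfl

lemma mbag_subset_f (i : ι) :
    mbag T hT r bags t i ⊆ mbag T hT r bags t (f T hT r bags t i) := by
  suffices H : ∀ n i, depth T hT r i = n →
      mbag T hT r bags t i ⊆ mbag T hT r bags t (f T hT r bags t i) from H _ i rfl
  intro n
  induction n using Nat.strong_induction_on with
  | _ n IH =>
    intro i hn
    by_cases h : kept T hT r bags t i
    · rw [f_eq_of_kept T hT r bags t h]
    · have hi : i ≠ r := fun hh => h (Or.inl hh)
      have hcard : (mbag T hT r bags t i).card ≤ 2 * t := by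
        by_contra hc
        exact h (Or.inr (by omega))
      rw [f_eq_of_not_kept T hT r bags t h]
      have hd := depth_parent T hT r hi
      exact (mbag_subset_parent T hT r bags t hi hcard).trans
        (IH (depth T hT r (parent T hT r i)) (by omega) _ rfl)

variable [DecidableRel T.Adj]


lemma card_children_le {i : ι} (hdeg : (i = r → T.degree r ≤ 2) ∧ (i ≠ r → T.degree i ≤ 3)) :
    (children T hT r i).card ≤ 2 := by
  have hsub : children T hT r i ⊆ T.neighborFinset i := by
    intro c hc
    rw [mem_neighborFinset]
    rcases (mem_children T hT r).1 hc with ⟨hcr, hp⟩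
    have := adj_parent T hT r hcr
    rw [hp] at this
    exact this.symm
  by_cases hi : i = r
  · calc (children T hT r i).card ≤ (T.neighborFinset i).card := Finset.card_le_card hsub
    _ ≤ 2 := by rw [card_neighborFinset_eq_degree]; rw [hi]; exact hdeg.1 hi
  · have hpar : parent T hT r i ∉ children T hT r i := by
      intro hmem
      rcases (mem_children T hT r).1 hmem with ⟨hpr, hpp⟩
      have h1 := depth_parent T hT r hi
      have h2 := depth_parent T hT r hpr
      rw [hpp] at h2
      omega
    have hsub2 : children T hT r i ⊆ T.neighborFinset i \ {parent T hT r i} := by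
      intro c hc
      rw [Finset.mem_sdiff, Finset.mem_singleton]
      exact ⟨hsub hc, fun h => hpar (h ▸ hc)⟩
    have hparmem : parent T hT r i ∈ T.neighborFinset i := by
      rw [mem_neighborFinset]; exact adj_parent T hT r hi
    calc (children T hT r i).card ≤ (T.neighborFinset i \ {parent T hT r i}).card :=
          Finset.card_le_card hsub2
    _ = (T.neighborFinset i).card - 1 := by
          rw [Finset.card_sdiff_of_subset (Finset.singleton_subset_iff.2 hparmem), Finset.card_singleton]
    _ ≤ 3 - 1 := by
          have := hdeg.2 hi
          rw [card_neighborFinset_eq_degree]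
          omega
    _ = 2 := rfl

lemma mbag_card_le (hbag : ∀ i, (bags i).card ≤ t)
    {i : ι} (hdeg : (i = r → T.degree r ≤ 2) ∧ (i ≠ r → T.degree i ≤ 3)) :
    (mbag T hT r bags t i).card ≤ 5 * t := by
  rw [mbag_eq]
  calc (bags i ∪ (children T hT r i).attach.biUnion (fun c =>
      if (mbag T hT r bags t c.1).card ≤ 2 * t then mbag T hT r bags t c.1 else ∅)).card
      ≤ (bags i).card + ((children T hT r i).attach.biUnion (fun c =>
        if (mbag T hT r bags t c.1).card ≤ 2 * t then mbag T hT r bags t c.1 else ∅)).card :=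
        Finset.card_union_le _ _
    _ ≤ t + ∑ c ∈ (children T hT r i).attach,
        (if (mbag T hT r bags t c.1).card ≤ 2 * t then mbag T hT r bags t c.1 else ∅).card := by
        have := hbag i
        have := Finset.card_biUnion_le (s := (children T hT r i).attach)
          (t := fun c => if (mbag T hT r bags t c.1).card ≤ 2 * t
            then mbag T hT r bags t c.1 else ∅)
        omega
    _ ≤ t + ∑ _c ∈ (children T hT r i).attach, 2 * t := by
        gcongr with c _
        split
        · assumption
        · simp
    _ = t + (children T hT r i).card * (2 * t) := by
        rw [Finset.sum_const, Finset.card_attach, smul_eq_mul]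
    _ ≤ t + 2 * (2 * t) := by
        have := card_children_le T hT r hdeg
        have h2 : (children T hT r i).card * (2*t) ≤ 2 * (2*t) := by
          exact Nat.mul_le_mul_right _ this
        omega
    _ = 5 * t := by ring

/-- Everything in a merged bag comes from the bag of some node `j` below `i`
with the same image. -/
lemma mbag_src {v : W} : ∀ i, v ∈ mbag T hT r bags t i →
    ∃ j, v ∈ bags j ∧ f T hT r bags t j = f T hT r bags t i ∧ i ∈ (P T hT r j).support := by
  suffices H : ∀ n i, Fintype.card ι - depth T hT r i = n → v ∈ mbag T hT r bags t i →
      ∃ j, v ∈ bags j ∧ f T hT r bags t j = f T hT r bags t i ∧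
        i ∈ (P T hT r j).support from fun i => H _ i rfl
  intro n
  induction n using Nat.strong_induction_on with
  | _ n IH =>
    intro i hn hv
    rw [mbag_eq] at hv
    rcases Finset.mem_union.1 hv with hv | hv
    · exact ⟨i, hv, rfl, self_mem_support T hT r i⟩
    · rw [Finset.mem_biUnion] at hv
      obtain ⟨c, _, hc⟩ := hv
      rcases (mem_children T hT r).1 c.2 with ⟨hcr, hcp⟩
      by_cases hcond : (mbag T hT r bags t c.1).card ≤ 2 * t
      · rw [if_pos hcond] at hc
        have hnk : ¬ kept T hT r bags t c.1 := by
          intro hk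
          rcases hk with hk | hk
          · exact hcr hk
          · omega
        have hfc : f T hT r bags t c.1 = f T hT r bags t i := by
          rw [f_eq_of_not_kept T hT r bags t hnk, hcp]
        have hdc : depth T hT r i + 1 = depth T hT r c.1 := by
          have := depth_parent T hT r hcr
          rw [hcp] at this
          omega
        have hcard := depth_lt_card T hT r c.1
        obtain ⟨j, hj1, hj2, hj3⟩ := IH (Fintype.card ι - depth T hT r c.1) (by omega)
          c.1 rfl hc
        refine ⟨j, hj1, by rw [hj2, hfc], ?_⟩
        have h1 : i ∈ (P T hT r c.1).support := by
          rw [support_P_parent T hT r hcr, hcp]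
          exact List.mem_cons_of_mem _ (self_mem_support T hT r i)
        exact support_subset_of_mem T hT r hj3 h1
      · rw [if_neg hcond] at hc
        exact absurd hc (Finset.notMem_empty v)

/-- A kept ancestor of `j` is still an ancestor of `f j`. -/
lemma kept_anc {k : ι} (hk : kept T hT r bags t k) :
    ∀ j, k ∈ (P T hT r j).support → k ∈ (P T hT r (f T hT r bags t j)).support := by
  suffices H : ∀ n j, depth T hT r j = n → k ∈ (P T hT r j).support →
      k ∈ (P T hT r (f T hT r bags t j)).support from fun j => H _ j rfl
  intro n
  induction n using Nat.strong_induction_on with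
  | _ n IH =>
    intro j hn hmem
    by_cases h : kept T hT r bags t j
    · rwa [f_eq_of_kept T hT r bags t h]
    · have hjr : j ≠ r := fun hh => h (Or.inl hh)
      rw [f_eq_of_not_kept T hT r bags t h]
      have hd := depth_parent T hT r hjr
      apply IH (depth T hT r (parent T hT r j)) (by omega) _ rfl
      rw [support_P_parent T hT r hjr] at hmem
      rcases List.mem_cons.mp hmem with h2 | h2
      · exact absurd (h2 ▸ hk) h
      · exact h2

/-- Separation: if a connected (in the induced sense) set `S` contains a node having
`c` as ancestor and one not having `c` as ancestor, then `parent c ∈ S`. -/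
lemma sep {S : Set ι} (hconn : (T.induce S).Connected)
    {j j' : ι} (hj' : j' ∈ S) (hj : j ∈ S)
    {c : ι} (hc' : c ∈ (P T hT r j').support) (hc : c ∉ (P T hT r j).support) :
    parent T hT r c ∈ S := by
  have hreach := hconn.preconnected ⟨j', hj'⟩ ⟨j, hj⟩
  obtain ⟨w⟩ := hreach
  clear hconn
  -- walk induction
  suffices H : ∀ (a b : S) (_w : (T.induce S).Walk a b),
      c ∈ (P T hT r a.1).support → c ∉ (P T hT r b.1).support →
      parent T hT r c ∈ S by
    exact H _ _ w hc' hc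
  intro a b w
  induction w with
  | nil => intro h1 h2; exact absurd h1 h2
  | @cons u x b hadj p IHp =>
    intro h1 h2
    by_cases hx : c ∈ (P T hT r x.1).support
    · exact IHp hx h2
    · have hadj' : T.Adj u.1 x.1 := hadj
      obtain ⟨he1, he2⟩ := crossing T hT r hadj' h1 hx
      rw [← he2]
      exact x.2


lemma f_mem_supp (i : ι) : f T hT r bags t i ∈ (P T hT r i).support := by
  suffices H : ∀ n i, depth T hT r i = n →
      f T hT r bags t i ∈ (P T hT r i).support from H _ i rfl
  intro n
  induction n using Nat.strong_induction_on with
  | _ n IH =>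
    intro i hn
    by_cases h : kept T hT r bags t i
    · rw [f_eq_of_kept T hT r bags t h]
      exact self_mem_support T hT r i
    · have hir : i ≠ r := fun hh => h (Or.inl hh)
      rw [f_eq_of_not_kept T hT r bags t h]
      rw [support_P_parent T hT r hir]
      have hd := depth_parent T hT r hir
      exact List.mem_cons_of_mem _
        (IH (depth T hT r (parent T hT r i)) (by omega) _ rfl)

lemma depth_f_le (i : ι) : depth T hT r (f T hT r bags t i) ≤ depth T hT r i := by
  by_cases h : f T hT r bags t i = i
  · rw [h]
  · exact le_of_lt (depth_lt_of_mem T hT r (f_mem_supp T hT r bags t i) h)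

lemma f_r : f T hT r bags t r = r := f_eq_of_kept T hT r bags t (kept_r T hT r bags t)

lemma f_step (x : ι) :
    f T hT r bags t x = f T hT r bags t (parent T hT r x) ∨
    f T hT r bags t (parent T hT r (f T hT r bags t x)) =
      f T hT r bags t (parent T hT r x) := by
  by_cases h : kept T hT r bags t x
  · right; rw [f_eq_of_kept T hT r bags t h]
  · left; exact f_eq_of_not_kept T hT r bags t h

/-- The push-forward of a tree edge: images are equal or related by the quotient
parent map. -/
lemma f_push {x y : ι} (h : T.Adj x y) :
    f T hT r bags t x = f T hT r bags t y ∨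
    (f T hT r bags t x ≠ f T hT r bags t y ∧
      (f T hT r bags t (parent T hT r (f T hT r bags t x)) = f T hT r bags t y ∨
       f T hT r bags t (parent T hT r (f T hT r bags t y)) = f T hT r bags t x)) := by
  by_cases hne : f T hT r bags t x = f T hT r bags t y
  · exact Or.inl hne
  · right
    refine ⟨hne, ?_⟩
    rcases parent_of_adj T hT r h with h1 | h1
    · left
      rcases f_step T hT r bags t x with h2 | h2
      · rw [← h1] at h2; exact absurd h2 hne
      · rw [← h1] at h2; exact h2
    · right
      rcases f_step T hT r bags t y with h2 | h2
      · rw [← h1] at h2; exact absurd h2.symm hne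
      · rw [← h1] at h2; exact h2

variable [Fintype W]

/-- The number of kept nodes is at most `|W| / t + 1`. -/
lemma kept_count (ht : 0 < t)
    (hsubtree : ∀ v : W, (T.induce {i | v ∈ bags i}).Connected)
    (hbag : ∀ i, (bags i).card ≤ t) :
    (Finset.univ.filter (kept T hT r bags t)).card ≤ Fintype.card W / t + 1 := by
  classical
  set K := Finset.univ.filter (fun i => kept T hT r bags t i ∧ i ≠ r) with hK
  have hK1 : Finset.univ.filter (kept T hT r bags t) ⊆ insert r K := by
    intro i hi
    rw [Finset.mem_filter] at hi
    rw [Finset.mem_insert, hK, Finset.mem_filter]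
    by_cases h : i = r
    · exact Or.inl h
    · exact Or.inr ⟨Finset.mem_univ i, hi.2, h⟩
  have hcard1 : (Finset.univ.filter (kept T hT r bags t)).card ≤ K.card + 1 :=
    le_trans (Finset.card_le_card hK1) (Finset.card_insert_le _ _)
  set Sc : ι → Finset W := fun c => mbag T hT r bags t c \ bags (parent T hT r c) with hSc
  have hlow : ∀ c ∈ K, t + 1 ≤ (Sc c).card := by
    intro c hc
    rw [hK, Finset.mem_filter] at hc
    obtain ⟨-, hkc, hcr⟩ := hc
    have h2t : 2 * t < (mbag T hT r bags t c).card := by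
      rcases hkc with h | h
      · exact absurd h hcr
      · exact h
    have hb := hbag (parent T hT r c)
    have hsub : mbag T hT r bags t c ⊆ Sc c ∪ bags (parent T hT r c) := by
      intro a ha
      rw [Finset.mem_union, hSc]
      by_cases hab : a ∈ bags (parent T hT r c)
      · exact Or.inr hab
      · exact Or.inl (Finset.mem_sdiff.2 ⟨ha, hab⟩)
    have := Finset.card_le_card hsub
    have := Finset.card_union_le (Sc c) (bags (parent T hT r c))
    omega
  have hdisj : ∀ c ∈ K, ∀ c' ∈ K, c ≠ c' → Disjoint (Sc c) (Sc c') := by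
    intro c hc c' hc' hne
    rw [hK, Finset.mem_filter] at hc hc'
    obtain ⟨-, hkc, hcr⟩ := hc
    obtain ⟨-, hkc', hcr'⟩ := hc'
    rw [Finset.disjoint_left]
    intro v hv hv'
    rw [hSc, Finset.mem_sdiff] at hv hv'
    obtain ⟨hvc, hnc⟩ := hv
    obtain ⟨hvc', hnc'⟩ := hv'
    obtain ⟨j, hj, hfj, hcj⟩ := mbag_src T hT r bags t c hvc
    obtain ⟨j', hj', hfj', hcj'⟩ := mbag_src T hT r bags t c' hvc'
    rw [f_eq_of_kept T hT r bags t hkc] at hfj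
    rw [f_eq_of_kept T hT r bags t hkc'] at hfj'
    by_cases h1 : c' ∈ (P T hT r j).support
    · by_cases h3 : c ∈ (P T hT r j').support
      · have h2 := kept_anc T hT r bags t hkc' j h1
        rw [hfj] at h2
        have h4 := kept_anc T hT r bags t hkc j' h3
        rw [hfj'] at h4
        have d1 := depth_lt_of_mem T hT r h2 (fun hh => hne hh.symm)
        have d2 := depth_lt_of_mem T hT r h4 hne
        omega
      · have := sep T hT r (hsubtree v) hj hj' hcj h3
        exact hnc this
    · have := sep T hT r (hsubtree v) hj' hj hcj' h1
      exact hnc' this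
  have hsum : K.card * (t + 1) ≤ Fintype.card W := by
    calc K.card * (t + 1) = ∑ _c ∈ K, (t + 1) := by
          rw [Finset.sum_const, smul_eq_mul]
      _ ≤ ∑ c ∈ K, (Sc c).card := Finset.sum_le_sum hlow
      _ = (K.biUnion Sc).card := (Finset.card_biUnion hdisj).symm
      _ ≤ Fintype.card W := Finset.card_le_univ _
  have hdiv : K.card ≤ Fintype.card W / (t + 1) := by
    rw [Nat.le_div_iff_mul_le (by omega : 0 < t + 1)]
    exact hsum
  have hdiv2 : Fintype.card W / (t + 1) ≤ Fintype.card W / t :=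
    Nat.div_le_div_left (by omega) ht
  omega

end
end CoarseTD

/-- Given a (nice) tree decomposition of a graph `G` on `n` vertices, rooted so
that every node has at most two children (formalized: some root has degree at most
`2` and all other nodes have degree at most `3`) and with all bags of size at most
`t`, there is a tree decomposition of `G` with at most `n / t` edges — hence at
most `n / t + 1` nodes — all of whose bags have size at most `5 t`. -/
theorem exists_coarse_tree_decomp {V ι : Type} [Fintype V] [Fintype ι] [DecidableEq ι]
    (G : SimpleGraph V) (T : SimpleGraph ι) [DecidableRel T.Adj]
    (bags : ι → Finset V) (hT : IsTreeDecomp G T bags)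
    (t : ℕ) (ht : 0 < t)
    (hroot : ∃ r : ι, T.degree r ≤ 2 ∧ ∀ i : ι, i ≠ r → T.degree i ≤ 3)
    (hbag : ∀ i, (bags i).card ≤ t) :
    ∃ (ι' : Type) (_ : Fintype ι') (T' : SimpleGraph ι') (bags' : ι' → Finset V),
      IsTreeDecomp G T' bags' ∧
      Fintype.card ι' ≤ Fintype.card V / t + 1 ∧
      ∀ i, (bags' i).card ≤ 5 * t := by
  classical
  obtain ⟨r, hdeg2, hdeg3⟩ := hroot
  have hTT := hT.isTree
  refine ⟨{i // CoarseTD.kept T hTT r bags t i}, inferInstance,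
    CoarseTD.pg (fun a => ⟨CoarseTD.f T hTT r bags t
      (CoarseTD.parent T hTT r a.1), CoarseTD.kept_f T hTT r bags t _⟩),
    fun a => CoarseTD.mbag T hTT r bags t a.1, ⟨?_, ?_, ?_, ?_⟩, ?_, ?_⟩
  · -- tree
    set π' : {i // CoarseTD.kept T hTT r bags t i} → {i // CoarseTD.kept T hTT r bags t i} :=
      fun a => ⟨CoarseTD.f T hTT r bags t (CoarseTD.parent T hTT r a.1),
        CoarseTD.kept_f T hTT r bags t _⟩ with hπ'
    have hdec : ∀ a, a.1 ≠ r → CoarseTD.depth T hTT r (π' a).1 < CoarseTD.depth T hTT r a.1 := by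
      intro a ha
      have h1 := CoarseTD.depth_parent T hTT r ha
      have h2 := CoarseTD.depth_f_le T hTT r bags t (CoarseTD.parent T hTT r a.1)
      show CoarseTD.depth T hTT r (CoarseTD.f T hTT r bags t
        (CoarseTD.parent T hTT r a.1)) < CoarseTD.depth T hTT r a.1
      omega
    constructor
    · -- connected
      haveI : Nonempty {i // CoarseTD.kept T hTT r bags t i} :=
        ⟨⟨r, CoarseTD.kept_r T hTT r bags t⟩⟩
      refine CoarseTD.pg_connected π' (fun a => CoarseTD.depth T hTT r a.1)
        ⟨r, CoarseTD.kept_r T hTT r bags t⟩ ?_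
      intro a ha
      refine hdec a ?_
      intro h
      exact ha (Subtype.ext h)
    · -- acyclic
      refine CoarseTD.pg_acyclic π' (fun a => CoarseTD.depth T hTT r a.1) ?_
      intro a
      by_cases ha : a.1 = r
      · left
        apply Subtype.ext
        rw [hπ']
        show CoarseTD.f T hTT r bags t (CoarseTD.parent T hTT r a.1) = a.1
        rw [ha, CoarseTD.parent_r, CoarseTD.f_r]
      · exact Or.inr (hdec a ha)
  · -- mem_bag
    intro v
    obtain ⟨i, hi⟩ := hT.mem_bag v
    exact ⟨⟨CoarseTD.f T hTT r bags t i, CoarseTD.kept_f T hTT r bags t i⟩,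
      CoarseTD.mbag_subset_f T hTT r bags t i (CoarseTD.bags_subset_mbag T hTT r bags t i hi)⟩
  · -- edge_bag
    intro u v huv
    obtain ⟨i, hu, hv⟩ := hT.edge_bag u v huv
    exact ⟨⟨CoarseTD.f T hTT r bags t i, CoarseTD.kept_f T hTT r bags t i⟩,
      CoarseTD.mbag_subset_f T hTT r bags t i (CoarseTD.bags_subset_mbag T hTT r bags t i hu),
      CoarseTD.mbag_subset_f T hTT r bags t i (CoarseTD.bags_subset_mbag T hTT r bags t i hv)⟩
  · -- subtree
    intro v
    refine CoarseTD.push_conn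
      (g := fun j => (⟨CoarseTD.f T hTT r bags t j, CoarseTD.kept_f T hTT r bags t j⟩ :
        {i // CoarseTD.kept T hTT r bags t i}))
      (hT.subtree v) ?_ ?_ ?_
    · intro j hj
      exact CoarseTD.mbag_subset_f T hTT r bags t j (CoarseTD.bags_subset_mbag T hTT r bags t j hj)
    · rintro ⟨a, hka⟩ ha
      obtain ⟨j, hj, hfj, -⟩ := CoarseTD.mbag_src T hTT r bags t a ha
      rw [CoarseTD.f_eq_of_kept T hTT r bags t hka] at hfj
      exact ⟨j, hj, Subtype.ext hfj⟩
    · intro x y hxy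
      rcases CoarseTD.f_push T hTT r bags t hxy with h | ⟨h1, h2⟩
      · exact Or.inl (Subtype.ext h)
      · right
        refine ⟨fun hh => h1 (congrArg Subtype.val hh), ?_⟩
        rcases h2 with h2 | h2
        · exact Or.inl (Subtype.ext h2)
        · exact Or.inr (Subtype.ext h2)
  · -- cardinality
    have hcount := CoarseTD.kept_count T hTT r bags t ht hT.subtree hbag
    rw [Fintype.card_subtype]
    exact hcount
  · -- bag sizes
    intro a
    refine CoarseTD.mbag_card_le T hTT r bags t hbag ⟨fun _ => hdeg2, fun h => hdeg3 a.1 h⟩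
end

section
/- Let T : ℕ → ℝ≥0 satisfy T(n) ≤ T(n_1) + T(n_2) + K·n for all sufficiently large n, where n_1 + n_2 ≤ n + β√n and (1−α)n ≤ n_1, n_2 ≤ αn + β√n for constants 1/2 < α < 1, β > 0, K > 0, and T bounded on any finite initial segment. Then T(n) = O(n log n): there exist constants c_1, c_2 such that T(n) ≤ c_1 n log₂ n + c_2 n for all n ≥ 1. -/
open Filter Real

lemma aux_sqrt_lin (c ε : ℝ) (hc : 0 < c) (hε : 0 < ε) :
    ∀ᶠ n : ℕ in Filter.atTop, c * Real.sqrt n ≤ ε * n := by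
  have h := (tendsto_natCast_atTop_atTop (R := ℝ)).eventually_ge_atTop ((c / ε) ^ 2)
  filter_upwards [h] with n hn
  have h0 : (0 : ℝ) ≤ (n : ℝ) := le_trans (by positivity) hn
  have hs : c / ε ≤ Real.sqrt n := by
    calc c / ε = Real.sqrt ((c / ε) ^ 2) := (Real.sqrt_sq (by positivity)).symm
      _ ≤ Real.sqrt n := Real.sqrt_le_sqrt hn
  have hc' : c ≤ Real.sqrt n * ε := by
    rw [div_le_iff₀ hε] at hs; linarith
  have hss : Real.sqrt n * Real.sqrt n = (n : ℝ) := Real.mul_self_sqrt h0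
  have hsnn : (0 : ℝ) ≤ Real.sqrt n := Real.sqrt_nonneg _
  nlinarith [mul_le_mul_of_nonneg_right hc' hsnn]

lemma aux_sqrt_log (c ε : ℝ) (hc : 0 < c) (hε : 0 < ε) :
    ∀ᶠ n : ℕ in Filter.atTop, c * Real.sqrt n * Real.logb 2 n ≤ ε * n := by
  have hlog2 : 0 < Real.log 2 := Real.log_pos one_lt_two
  have h := isLittleO_log_rpow_atTop (show (0:ℝ) < 1/2 by norm_num)
  have h2 := h.def (show (0:ℝ) < ε * Real.log 2 / c by positivity)
  have h3 := (tendsto_natCast_atTop_atTop (R := ℝ)).eventually h2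
  filter_upwards [h3, Filter.eventually_ge_atTop 1] with n hn hn1
  have h1 : (1 : ℝ) ≤ (n : ℝ) := by exact_mod_cast hn1
  have h0 : (0 : ℝ) ≤ (n : ℝ) := by linarith
  have hss : Real.sqrt n * Real.sqrt n = (n : ℝ) := Real.mul_self_sqrt h0
  have hsnn : (0 : ℝ) ≤ Real.sqrt n := Real.sqrt_nonneg _
  have hrpow : ((n : ℝ)) ^ ((1:ℝ)/2) = Real.sqrt n := by
    rw [Real.sqrt_eq_rpow]
  have hlogn : Real.log n ≤ (ε * Real.log 2 / c) * Real.sqrt n := by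
    have := hn
    rw [Real.norm_eq_abs, Real.norm_eq_abs, abs_of_nonneg (Real.log_nonneg h1),
      abs_of_nonneg (by positivity : (0:ℝ) ≤ ((n : ℝ)) ^ ((1:ℝ)/2)), hrpow] at this
    exact this
  have key : c * Real.sqrt n * Real.log n ≤ ε * Real.log 2 * n := by
    have h4 : c * Real.sqrt n * Real.log n ≤ c * Real.sqrt n * ((ε * Real.log 2 / c) * Real.sqrt n) :=
      mul_le_mul_of_nonneg_left hlogn (by positivity)
    have h5 : c * Real.sqrt n * ((ε * Real.log 2 / c) * Real.sqrt n)
        = ε * Real.log 2 * n := by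
      field_simp
      linear_combination hss
    rw [h5] at h4
    exact h4
  rw [Real.logb]
  rw [show c * Real.sqrt n * (Real.log n / Real.log 2) = (c * Real.sqrt n * Real.log n) / Real.log 2 by ring]
  rw [div_le_iff₀ hlog2]
  nlinarith [key]



/-- The separator recurrence `T(n) ≤ T(n₁) + T(n₂) + K n` for all sufficiently large
`n`, with subproblem sizes `n₁ + n₂ ≤ n + β√n` and `(1−α)n ≤ n₁, n₂ ≤ αn + β√n`
(for constants `1/2 < α < 1`, `β, K > 0`), has solution `T(n) = O(n log n)`:
there are constants `c₁, c₂` with `T(n) ≤ c₁ n log₂ n + c₂ n` for all `n ≥ 1`. -/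
theorem separator_recurrence_nlogn (T : ℕ → ℝ) (hT0 : ∀ n, 0 ≤ T n)
    (α β K : ℝ) (N : ℕ)
    (hα1 : 1 / 2 < α) (hα2 : α < 1) (hβ : 0 < β) (hK : 0 < K)
    (hrec : ∀ n : ℕ, N ≤ n → ∃ n₁ n₂ : ℕ,
      (n₁ : ℝ) + n₂ ≤ n + β * Real.sqrt n ∧
      (1 - α) * n ≤ n₁ ∧ (n₁ : ℝ) ≤ α * n + β * Real.sqrt n ∧
      (1 - α) * n ≤ n₂ ∧ (n₂ : ℝ) ≤ α * n + β * Real.sqrt n ∧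
      T n ≤ T n₁ + T n₂ + K * n) :
    ∃ c₁ c₂ : ℝ, ∀ n : ℕ, 1 ≤ n → T n ≤ c₁ * n * Real.logb 2 n + c₂ * n := by
  set α' : ℝ := (1 + α) / 2 with hα'def
  have hαα' : α < α' := by rw [hα'def]; linarith
  have hα'1 : α' < 1 := by rw [hα'def]; linarith
  have hα'pos : 1 / 2 < α' := by rw [hα'def]; linarith
  set δ : ℝ := -Real.logb 2 α' with hδdef
  have hδ : 0 < δ := by
    have : Real.logb 2 α' < 0 := Real.logb_neg one_lt_two (by linarith) hα'1
    rw [hδdef]; linarith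
  -- eventual conditions
  have hevN : ∀ᶠ n : ℕ in Filter.atTop, N ≤ n := Filter.eventually_ge_atTop N
  have hev2 : ∀ᶠ n : ℕ in Filter.atTop, 2 ≤ n := Filter.eventually_ge_atTop 2
  have hevb : ∀ᶠ n : ℕ in Filter.atTop, (1 : ℝ) ≤ (1 - α) * n := by
    have h := (tendsto_natCast_atTop_atTop (R := ℝ)).eventually_ge_atTop (1 / (1 - α))
    filter_upwards [h] with n hn
    rw [div_le_iff₀ (by linarith : (0:ℝ) < 1 - α)] at hn
    linarith
  have hevc : ∀ᶠ n : ℕ in Filter.atTop, β * Real.sqrt n ≤ (α' - α) * n :=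
    aux_sqrt_lin β (α' - α) hβ (by linarith)
  have heve : ∀ᶠ n : ℕ in Filter.atTop, β * Real.sqrt n ≤ (δ / 4) * n :=
    aux_sqrt_lin β (δ / 4) hβ (by linarith)
  have hevd : ∀ᶠ n : ℕ in Filter.atTop, β * Real.sqrt n * Real.logb 2 n ≤ (δ / 4) * n :=
    aux_sqrt_log β (δ / 4) hβ (by linarith)
  obtain ⟨n₀, hn₀⟩ := Filter.eventually_atTop.mp
    ((((hevN.and hev2).and hevb).and (hevc.and heve)).and hevd)
  set c₂ : ℝ := 1 + ∑ i ∈ Finset.range n₀, T i with hc₂def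
  have hc₂1 : 1 ≤ c₂ := by
    have : 0 ≤ ∑ i ∈ Finset.range n₀, T i := Finset.sum_nonneg fun i _ => hT0 i
    rw [hc₂def]; linarith
  set c₁ : ℝ := max c₂ (2 * K / δ) with hc₁def
  have hc₂c₁ : c₂ ≤ c₁ := le_max_left _ _
  have hc₁K : 2 * K / δ ≤ c₁ := le_max_right _ _
  have hc₁0 : 0 ≤ c₁ := le_trans (by linarith) hc₂c₁
  have hc₁δK : 2 * K ≤ c₁ * δ := by
    rw [div_le_iff₀ hδ] at hc₁K; linarith
  clear_value α' δ c₂ c₁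
  refine ⟨c₁, c₂, ?_⟩
  intro n
  induction n using Nat.strong_induction_on with
  | _ n ih =>
    intro hn1
    have h1n : (1 : ℝ) ≤ (n : ℝ) := by exact_mod_cast hn1
    have hlogn : 0 ≤ Real.logb 2 n := Real.logb_nonneg one_lt_two h1n
    rcases lt_or_ge n n₀ with hlt | hge
    · -- base case
      have hTn : T n ≤ c₂ := by
        have := Finset.single_le_sum (fun i (_ : i ∈ Finset.range n₀) => hT0 i)
          (Finset.mem_range.mpr hlt)
        rw [hc₂def]; linarith
      nlinarith [mul_nonneg (mul_nonneg hc₁0 (by linarith : (0:ℝ) ≤ (n:ℝ))) hlogn]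
    · -- inductive step
      obtain ⟨⟨⟨⟨hN, h2⟩, hb⟩, hc, he⟩, hd⟩ := hn₀ n hge
      have h2n : (2 : ℝ) ≤ (n : ℝ) := by exact_mod_cast h2
      obtain ⟨n₁, n₂, hsum, h1l, h1u, h2l, h2u, hT⟩ := hrec n hN
      set s : ℝ := Real.sqrt n with hsdef
      clear_value s
      have hsnn : 0 ≤ s := hsdef ▸ Real.sqrt_nonneg _
      set L : ℝ := Real.logb 2 n with hLdef
      clear_value L
      -- subproblem sizes
      have hn₁1 : 1 ≤ n₁ := by
        have : (1 : ℝ) ≤ (n₁ : ℝ) := le_trans hb h1l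
        exact_mod_cast this
      have hn₂1 : 1 ≤ n₂ := by
        have : (1 : ℝ) ≤ (n₂ : ℝ) := le_trans hb h2l
        exact_mod_cast this
      have hn₁α' : (n₁ : ℝ) ≤ α' * n := by linarith
      have hn₂α' : (n₂ : ℝ) ≤ α' * n := by linarith
      have hα'nltn : α' * (n : ℝ) < 1 * n := mul_lt_mul_of_pos_right hα'1 (by linarith)
      have hn₁lt : n₁ < n := by
        have : (n₁ : ℝ) < (n : ℝ) := by linarith
        exact_mod_cast this
      have hn₂lt : n₂ < n := by
        have : (n₂ : ℝ) < (n : ℝ) := by linarith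
        exact_mod_cast this
      have IH1 := ih n₁ hn₁lt hn₁1
      have IH2 := ih n₂ hn₂lt hn₂1
      -- log bounds
      have hhalf : (1 / 2 : ℝ) * n ≤ α' * n :=
        mul_le_mul_of_nonneg_right hα'pos.le (by linarith)
      have hα'n1 : (1 : ℝ) ≤ α' * n := by linarith
      have hLsplit : Real.logb 2 (α' * n) = -δ + L := by
        rw [Real.logb_mul (by linarith : α' ≠ 0) (by positivity : ((n:ℝ)) ≠ 0), hδdef, hLdef]
        ring
      have hLnn : 0 ≤ -δ + L := by
        rw [← hLsplit]; exact Real.logb_nonneg one_lt_two hα'n1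
      have hlog1 : Real.logb 2 (n₁ : ℝ) ≤ -δ + L := by
        rw [← hLsplit]
        exact Real.logb_le_logb_of_le one_lt_two (by exact_mod_cast hn₁1) hn₁α'
      have hlog2 : Real.logb 2 (n₂ : ℝ) ≤ -δ + L := by
        rw [← hLsplit]
        exact Real.logb_le_logb_of_le one_lt_two (by exact_mod_cast hn₂1) hn₂α'
      -- combine
      have hA1 : c₁ * (n₁ : ℝ) * Real.logb 2 (n₁ : ℝ) ≤ c₁ * (n₁ : ℝ) * (-δ + L) :=
        mul_le_mul_of_nonneg_left hlog1 (by positivity)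
      have hA2 : c₁ * (n₂ : ℝ) * Real.logb 2 (n₂ : ℝ) ≤ c₁ * (n₂ : ℝ) * (-δ + L) :=
        mul_le_mul_of_nonneg_left hlog2 (by positivity)
      have hB : ((n₁ : ℝ) + n₂) * (-δ + L) ≤ ((n : ℝ) + β * s) * (-δ + L) :=
        mul_le_mul_of_nonneg_right hsum hLnn
      have hC : T n ≤ c₁ * (((n : ℝ) + β * s) * (-δ + L)) + c₂ * ((n : ℝ) + β * s) + K * n := by
        have hB' : c₁ * (((n₁ : ℝ) + n₂) * (-δ + L)) ≤ c₁ * (((n : ℝ) + β * s) * (-δ + L)) :=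
          mul_le_mul_of_nonneg_left hB hc₁0
        have hB'' : c₂ * ((n₁ : ℝ) + n₂) ≤ c₂ * ((n : ℝ) + β * s) :=
          mul_le_mul_of_nonneg_left hsum (by linarith)
        linarith [hA1, hA2, hT, IH1, IH2]
      have hD : c₁ * (((n : ℝ) + β * s) * (-δ + L))
          = c₁ * n * L - c₁ * δ * n + c₁ * (β * s * L) - c₁ * δ * (β * s) := by ring
      have hE1 : c₁ * (β * s * L) ≤ c₁ * ((δ / 4) * n) :=
        mul_le_mul_of_nonneg_left hd hc₁0
      have hE2 : c₂ * (β * s) ≤ c₁ * ((δ / 4) * n) := by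
        have h' : c₂ * (β * s) ≤ c₁ * (β * s) :=
          mul_le_mul_of_nonneg_right hc₂c₁ (by positivity)
        have h'' : c₁ * (β * s) ≤ c₁ * ((δ / 4) * n) := mul_le_mul_of_nonneg_left he hc₁0
        linarith
      have hE3 : 0 ≤ c₁ * δ * (β * s) := by positivity
      have hE4 : K * n ≤ c₁ * δ / 2 * n :=
        mul_le_mul_of_nonneg_right (by linarith) (by linarith)
      linarith [hC, hD, hE1, hE2, hE3, hE4]
end
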